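/- arXiv:1806.00464 — 9 statements merged into one kernel-verified Lean document; each statement's English description precedes it below -/
import Mathlib

section
/- Let k be a field of characteristic p > 0 and let B be a finite-dimensional commutative k-algebra equipped with a k-algebra homomorphism π : B → k. Then the following are equivalent: (i) x^p = 0 for every x ∈ ker π; (ii) B is a local ring and the nilradical of B equals the kernel of the Frobenius endomorphism of B, i.e. nil(B) = {b ∈ B : b^p = 0}. -/
/-- Let `k` be a field of characteristic `p > 0` and `B` a finite-dimensional commutative
`k`-algebra with a `k`-algebra homomorphism `π : B → k`. The following are equivalent:
(i) `x ^ p = 0` for every `x ∈ ker π`;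
(ii) `B` is local and the nilradical of `B` equals the kernel of Frobenius,
i.e. `nil(B) = {b : B | b ^ p = 0}`. -/
theorem ker_pi_pow_p_eq_zero_iff_isLocalRing_and_nilradical_eq_ker_frobenius
    (p : ℕ) [Fact p.Prime] (k B : Type*) [Field k] [CharP k p]
    [CommRing B] [Algebra k B] [FiniteDimensional k B] (π : B →ₐ[k] k) :
    (∀ x ∈ RingHom.ker π, x ^ p = 0) ↔
      (IsLocalRing B ∧ ∀ b : B, b ∈ nilradical B ↔ b ^ p = 0) := by
  have hp : 0 < p := (Fact.out : p.Prime).pos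
  haveI : Nontrivial B := π.toRingHom.domain_nontrivial
  have hsurj : Function.Surjective π := fun c => ⟨algebraMap k B c, π.commutes c⟩
  constructor
  · intro h
    have hlocal : IsLocalRing B := by
      apply IsLocalRing.of_isUnit_or_isUnit_one_sub_self
      intro a
      rcases eq_or_ne (π a) 0 with ha | ha
      · right
        have hnil : IsNilpotent (1 - a - 1) := by
          refine ⟨p, h _ ?_⟩
          simp [RingHom.mem_ker, ha]
        have := hnil.isUnit_add_left_of_commute isUnit_one (Commute.all _ _)
        simpa [sub_eq_add_neg] using this
      · left
        have hnil : IsNilpotent (a - algebraMap k B (π a)) := by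
          refine ⟨p, h _ ?_⟩
          simp [RingHom.mem_ker]
        have hu : IsUnit (algebraMap k B (π a)) := by
          refine IsUnit.map (algebraMap k B) (isUnit_iff_ne_zero.mpr ha)
        have := hnil.isUnit_add_left_of_commute hu (Commute.all _ _)
        simpa [sub_eq_add_neg] using this
    refine ⟨hlocal, fun b => ⟨fun hb => ?_, fun hb => ⟨p, hb⟩⟩⟩
    have : IsNilpotent (π b) := (mem_nilradical.mp hb).map π
    have hπb : π b = 0 := this.eq_zero
    exact h b (by simpa [RingHom.mem_ker] using hπb)
  · rintro ⟨hlocal, hnil⟩ x hx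
    haveI : IsArtinianRing B := isArtinian_of_tower k inferInstance
    have hmax : (RingHom.ker π).IsMaximal :=
      RingHom.ker_isMaximal_of_surjective π hsurj
    have hker : RingHom.ker π = IsLocalRing.maximalIdeal B :=
      IsLocalRing.eq_maximalIdeal hmax
    have hsub : IsLocalRing.maximalIdeal B ≤ nilradical B := by
      rw [nilradical_eq_sInf]
      refine le_sInf fun P hP => ?_
      haveI : P.IsPrime := hP
      haveI : P.IsMaximal := IsArtinianRing.isMaximal_of_isPrime P
      exact (IsLocalRing.eq_maximalIdeal this).ge
    exact (hnil x).mp (hsub (hker ▸ hx))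
end

section
/- Let k be a field and B a finite-dimensional commutative local k-algebra equipped with a k-algebra homomorphism π : B → k. Let R and S be integral domains that are k-algebras, and let ∂ : R → S ⊗_k B be a B-operator from R to S whose underlying homomorphism ∂₀ : R → S is injective. Then ∂ extends uniquely to a B-operator on the fields of fractions: there is a unique k-algebra homomorphism ∂' : Frac(R) → Frac(S) ⊗_k B such that ∂' ∘ (R → Frac(R)) = ((S → Frac(S)) ⊗ id_B) ∘ ∂. -/
open TensorProduct

/-- The underlying homomorphism extractor `δ₀ = (id_T ⊗ π) ∘ δ` of a `B`-operator:
the algebra map `T ⊗[k] B → T` induced by `π : B → k` and `T ⊗[k] k ≅ T`. -/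
noncomputable def BOp.counit (k T B : Type*) [CommSemiring k] [CommSemiring T] [Algebra k T]
    [CommSemiring B] [Algebra k B] (π : B →ₐ[k] k) : T ⊗[k] B →ₐ[k] T :=
  (Algebra.TensorProduct.rid k k T).toAlgHom.comp
    (Algebra.TensorProduct.map (AlgHom.id k T) π)

set_option maxHeartbeats 1000000 in
/-- Let `B` be a finite-dimensional commutative local `k`-algebra with a `k`-algebra map
`π : B → k`, let `R`, `S` be `k`-algebra domains, and let `δ : R → S ⊗[k] B` be a `B`-operator
from `R` to `S` whose underlying homomorphism `δ₀ : R → S` is injective. Then `δ` extends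
uniquely to a `B`-operator on the fields of fractions `FR = Frac(R)`, `FS = Frac(S)`:
there is a unique `k`-algebra homomorphism `δ' : FR → FS ⊗[k] B` with
`δ' ∘ (R → FR) = ((S → FS) ⊗ id_B) ∘ δ`. -/
theorem BOperator.extends_uniquely_to_fractionField
    (k B : Type*) [Field k] [CommRing B] [Algebra k B]
    [FiniteDimensional k B] [IsLocalRing B] (π : B →ₐ[k] k)
    (R S FR FS : Type*) [CommRing R] [IsDomain R] [Algebra k R]
    [CommRing S] [IsDomain S] [Algebra k S]
    [Field FR] [Algebra R FR] [IsFractionRing R FR] [Algebra k FR] [IsScalarTower k R FR]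
    [Field FS] [Algebra S FS] [IsFractionRing S FS] [Algebra k FS] [IsScalarTower k S FS]
    (δ : R →ₐ[k] S ⊗[k] B)
    (hinj : Function.Injective ((BOp.counit k S B π).comp δ)) :
    ∃! δ' : FR →ₐ[k] FS ⊗[k] B,
      δ'.comp (IsScalarTower.toAlgHom k R FR) =
        (Algebra.TensorProduct.map (IsScalarTower.toAlgHom k S FS) (AlgHom.id k B)).comp δ := by
  classical
  set ι : S →ₐ[k] FS := IsScalarTower.toAlgHom k S FS with hι
  set f : R →ₐ[k] FS ⊗[k] B :=
    (Algebra.TensorProduct.map ι (AlgHom.id k B)).comp δ with hfdef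
  -- π is surjective
  have hπsurj : Function.Surjective π := fun c => ⟨algebraMap k B c, π.commutes c⟩
  -- the maximal ideal of B is nilpotent
  have hart : IsArtinianRing B := IsArtinianRing.of_finite k B
  obtain ⟨n, hn⟩ : IsNilpotent (IsLocalRing.maximalIdeal B) := by
    rw [← IsLocalRing.jacobson_eq_maximalIdeal (⊥ : Ideal B) bot_ne_top]
    exact IsArtinianRing.isNilpotent_jacobson_bot
  -- elements killed by π are nilpotent
  have hker : ∀ b : B, π b = 0 → b ^ n = 0 := by
    intro b hb
    have hb' : b ∈ IsLocalRing.maximalIdeal B := by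
      rw [← IsLocalRing.ker_eq_maximalIdeal π.toRingHom hπsurj]
      exact hb
    have := Ideal.pow_mem_pow hb' n
    rw [hn] at this
    simpa using this
  -- elements of the kernel of the counit on FS ⊗ B are nilpotent
  have hcounit_ker : ∀ x : FS ⊗[k] B, BOp.counit k FS B π x = 0 → IsNilpotent x := by
    intro x hx
    have hmap : ∀ y : FS ⊗[k] B,
        Algebra.TensorProduct.map (AlgHom.id k FS) π y
          = LinearMap.lTensor FS π.toLinearMap y := by
      intro y
      induction y using TensorProduct.induction_on with
      | zero => simp
      | tmul a b => simp
      | add a b ha hb => simp [map_add, ha, hb]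
    have h1 : LinearMap.lTensor FS π.toLinearMap x = 0 := by
      rw [← hmap]
      have : (Algebra.TensorProduct.rid k k FS)
          (Algebra.TensorProduct.map (AlgHom.id k FS) π x) = 0 := hx
      have h2 := congrArg (Algebra.TensorProduct.rid k k FS).symm this
      simp at h2
      exact h2
    have hexact := lTensor_exact (R := k) FS
      (LinearMap.exact_subtype_ker_map π.toLinearMap) hπsurj
    obtain ⟨w, hw⟩ := (hexact x).mp h1
    rw [← hw]
    clear hw h1 hx
    induction w using TensorProduct.induction_on with
    | zero => simp
    | tmul s b =>
      refine ⟨n, ?_⟩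
      have hb : (b : B) ^ n = 0 := hker b (by exact LinearMap.mem_ker.mp b.2)
      simp only [LinearMap.lTensor_tmul, Submodule.coe_subtype]
      rw [Algebra.TensorProduct.tmul_pow, hb, TensorProduct.tmul_zero]
    | add a b ha hb =>
      rw [map_add]
      exact Commute.isNilpotent_add (Commute.all _ _) ha hb
  -- elements with nonzero counit are units
  have hunit : ∀ x : FS ⊗[k] B, BOp.counit k FS B π x ≠ 0 → IsUnit x := by
    intro x hx
    set u := BOp.counit k FS B π x with hu
    have huu : IsUnit ((Algebra.TensorProduct.includeLeft : FS →ₐ[k] FS ⊗[k] B) u) :=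
      (isUnit_iff_ne_zero.mpr hx).map _
    have hcu : BOp.counit k FS B π ((Algebra.TensorProduct.includeLeft :
        FS →ₐ[k] FS ⊗[k] B) u) = u := by
      simp [BOp.counit]
    have hnil : IsNilpotent (x - (Algebra.TensorProduct.includeLeft :
        FS →ₐ[k] FS ⊗[k] B) u) := by
      apply hcounit_ker
      rw [map_sub, hcu, ← hu, sub_self]
    have := IsNilpotent.isUnit_add_left_of_commute hnil huu (Commute.all _ _)
    simpa using this
  -- the counit is natural
  have hnat : (BOp.counit k FS B π).comp (Algebra.TensorProduct.map ι (AlgHom.id k B))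
      = ι.comp (BOp.counit k S B π) := by
    ext s
    · simp [BOp.counit]
    · simp [BOp.counit]
  -- ι is injective
  have hιinj : Function.Injective ι := IsFractionRing.injective S FS
  -- nonzerodivisors of R are mapped to units by f
  have hf : ∀ y : nonZeroDivisors R, IsUnit (f y) := by
    intro y
    apply hunit
    intro h0
    have h1 : BOp.counit k FS B π (f (y : R)) = ι ((BOp.counit k S B π) (δ (y : R))) :=
      DFunLike.congr_fun hnat (δ (y : R))
    have h2 : ((BOp.counit k S B π).comp δ) (y : R) = 0 := by
      apply hιinj
      rw [map_zero]
      exact (h1.symm.trans h0)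
    have h3 : (y : R) = 0 := by
      apply hinj; rw [h2, map_zero]
    exact nonZeroDivisors.coe_ne_zero y h3
  -- existence via localization lift
  have key : (IsLocalization.liftAlgHom (M := nonZeroDivisors R) (S := FR) hf).comp
      (IsScalarTower.toAlgHom k R FR) = f := by
    apply AlgHom.ext
    intro r
    exact IsLocalization.lift_eq _ r
  refine ⟨IsLocalization.liftAlgHom (M := nonZeroDivisors R) hf, key, ?_⟩
  intro g hg
  apply AlgHom.coe_ringHom_injective
  apply IsLocalization.ringHom_ext (nonZeroDivisors R)
  have : g.comp (IsScalarTower.toAlgHom k R FR)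
      = (IsLocalization.liftAlgHom (M := nonZeroDivisors R) (S := FR) hf).comp
        (IsScalarTower.toAlgHom k R FR) := by rw [hg, key]
  exact congrArg AlgHom.toRingHom this
end

section
/- Let k be a field of characteristic p > 0 and B a commutative k-algebra with a k-algebra homomorphism π : B → k such that x^p = 0 for every x ∈ ker π. Let R and T be k-algebras and ∂ : R → T ⊗_k B a B-operator. Then for every r ∈ R one has ∂(r^p) = ∂₀(r^p) ⊗ 1_B = (∂₀(r))^p ⊗ 1_B; that is, every p-th power of R lies in the constants of ∂. -/
open TensorProduct

lemma BOp.counit_tmul (k T B : Type*) [CommSemiring k] [CommSemiring T] [Algebra k T]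
    [CommSemiring B] [Algebra k B] (π : B →ₐ[k] k) (t : T) (b : B) :
    BOp.counit k T B π (t ⊗ₜ[k] b) = π b • t := by
  simp [BOp.counit]

/-- Let `k` be a field of characteristic `p > 0` and `B` a commutative `k`-algebra with a
`k`-algebra map `π : B → k` such that `x ^ p = 0` for every `x ∈ ker π`. Let `R`, `T` be
`k`-algebras and `δ : R → T ⊗[k] B` a `B`-operator. Then for every `r ∈ R` one has
`δ(r ^ p) = δ₀(r ^ p) ⊗ 1 = (δ₀ r) ^ p ⊗ 1`; that is, every `p`-th power of `R` lies in the
constants of `δ`. -/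
theorem BOperator.pow_p_mem_constants
    (p : ℕ) [Fact p.Prime] (k : Type*) [Field k] [CharP k p]
    (B : Type*) [CommRing B] [Algebra k B] (π : B →ₐ[k] k)
    (hπ : ∀ x ∈ RingHom.ker π, x ^ p = 0)
    (R T : Type*) [CommRing R] [Algebra k R] [CommRing T] [Algebra k T]
    (δ : R →ₐ[k] T ⊗[k] B) (r : R) :
    δ (r ^ p) = (((BOp.counit k T B π).comp δ) (r ^ p)) ⊗ₜ[k] (1 : B) ∧
      ((BOp.counit k T B π).comp δ) (r ^ p) = (((BOp.counit k T B π).comp δ) r) ^ p := by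
  have h2 : ((BOp.counit k T B π).comp δ) (r ^ p) = (((BOp.counit k T B π).comp δ) r) ^ p :=
    map_pow _ r p
  refine ⟨?_, h2⟩
  rcases subsingleton_or_nontrivial (T ⊗[k] B) with hs | hn
  · exact Subsingleton.elim _ _
  · haveI : CharP (T ⊗[k] B) p := charP_of_injective_algebraMap
      (algebraMap k (T ⊗[k] B)).injective p
    have key : ∀ z : T ⊗[k] B, (z - (BOp.counit k T B π z) ⊗ₜ[k] (1 : B)) ^ p = 0 := by
      intro z
      induction z using TensorProduct.induction_on with
      | zero => simp [zero_pow (Fact.out (p := p.Prime)).ne_zero]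
      | tmul t b =>
          have he : b - algebraMap k B (π b) ∈ RingHom.ker π := by
            simp [RingHom.mem_ker, map_sub]
          have : t ⊗ₜ[k] b - (BOp.counit k T B π (t ⊗ₜ[k] b)) ⊗ₜ[k] (1 : B)
              = t ⊗ₜ[k] (b - algebraMap k B (π b)) := by
            rw [BOp.counit_tmul, TensorProduct.tmul_sub, TensorProduct.smul_tmul,
              Algebra.smul_def, mul_one]
          rw [this, Algebra.TensorProduct.tmul_pow, hπ _ he, TensorProduct.tmul_zero]
      | add a b ha hb =>
          have : a + b - (BOp.counit k T B π (a + b)) ⊗ₜ[k] (1 : B)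
              = (a - (BOp.counit k T B π a) ⊗ₜ[k] (1 : B))
                + (b - (BOp.counit k T B π b) ⊗ₜ[k] (1 : B)) := by
            rw [map_add, TensorProduct.add_tmul]; ring
          rw [this, add_pow_char, ha, hb, add_zero]
    have hx := key (δ r)
    have expand : δ (r ^ p) = ((BOp.counit k T B π (δ r)) ⊗ₜ[k] (1 : B)
        + (δ r - (BOp.counit k T B π (δ r)) ⊗ₜ[k] (1 : B))) ^ p := by
      rw [map_pow]; ring_nf
    rw [expand, add_pow_char, hx, add_zero, h2]
    rw [AlgHom.comp_apply] at h2 ⊢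
    rw [Algebra.TensorProduct.tmul_pow, one_pow]
end

section
/- Let k be a field of characteristic p > 0 and B a commutative k-algebra with a k-algebra homomorphism π : B → k such that x^p = 0 for every x ∈ ker π. Let k ⊆ K ⊆ M be a tower of fields, T a k-algebra, and ∂^K : K → T ⊗_k B a B-operator such that m^p lies in the constants of ∂^K for every m ∈ M (i.e. ∂^K(m^p) = ∂₀^K(m^p) ⊗ 1_B). Let b : M → T be a k-algebra homomorphism with b|_K = ∂₀^K. Then there exists a B-operator ∂^M : M → T ⊗_k B such that (id_T ⊗ π) ∘ ∂^M = b and ∂^M|_K = ∂^K. -/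
open TensorProduct

section Aux

variable {p : ℕ} [hp : Fact p.Prime] {k : Type*} [Field k] [CharP k p]
    {B : Type*} [CommRing B] [Algebra k B] {π : B →ₐ[k] k}
    {K M T : Type*} [Field K] [Field M] [CommRing T]
    [Algebra k K] [Algebra k M] [Algebra k T] [Algebra K M] [IsScalarTower k K M]
    {δK : K →ₐ[k] T ⊗[k] B} {b : M →ₐ[k] T}

theorem BOp.counit_tmul_one (t : T) : BOp.counit k T B π (t ⊗ₜ[k] (1 : B)) = t := by
  simp [BOp.counit]

theorem BOp.aux_isField
    (hpow : ∀ m : M, ∃ x : K, algebraMap K M x = m ^ p)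
    (L : Subalgebra k M) (hmem : ∀ x : K, algebraMap K M x ∈ L) : IsField ↥L := by
  refine ⟨⟨0, 1, zero_ne_one⟩, mul_comm, ?_⟩
  rintro ⟨u, hu⟩ ha
  have hu0 : u ≠ 0 := fun h => ha (Subtype.ext h)
  obtain ⟨x, hx⟩ := hpow u
  have hxM : algebraMap K M x ≠ 0 := by
    rw [hx]; exact pow_ne_zero _ hu0
  refine ⟨⟨u ^ (p - 1) * algebraMap K M x⁻¹, L.mul_mem (pow_mem hu _) (hmem x⁻¹)⟩, ?_⟩
  apply Subtype.ext
  show u * (u ^ (p - 1) * algebraMap K M x⁻¹) = 1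
  rw [map_inv₀, ← mul_assoc]
  have hup : u * u ^ (p - 1) = u ^ p := by
    rw [← pow_succ', Nat.sub_add_cancel hp.out.one_le]
  rw [hup, ← hx]
  exact mul_inv_cancel₀ hxM

set_option maxHeartbeats 2000000 in
set_option synthInstance.maxHeartbeats 400000 in
theorem BOp.step
    (hconst : ∀ m : M, ∃ x : K, algebraMap K M x = m ^ p ∧
      δK x = (((BOp.counit k T B π).comp δK) x) ⊗ₜ[k] (1 : B))
    (hb : b.comp (IsScalarTower.toAlgHom k K M) = (BOp.counit k T B π).comp δK)
    (L : Subalgebra k M) (f : ↥L →ₐ[k] T ⊗[k] B)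
    (hmem : ∀ x : K, algebraMap K M x ∈ L)
    (hKf : ∀ (x : K) (h : algebraMap K M x ∈ L), f ⟨algebraMap K M x, h⟩ = δK x)
    (hcou : ∀ y : L, BOp.counit k T B π (f y) = b y)
    (m : M) (hm : m ∉ L) :
    ∃ (L' : Subalgebra k M) (f' : ↥L' →ₐ[k] T ⊗[k] B),
      m ∈ L' ∧ L ≤ L' ∧
      (∀ (a : M) (h : a ∈ L) (h' : a ∈ L'), f' ⟨a, h'⟩ = f ⟨a, h⟩) ∧
      (∀ y : L', BOp.counit k T B π (f' y) = b y) := by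
  haveI : CharP M p := charP_of_injective_algebraMap (algebraMap k M).injective p
  letI : Field ↥L := (BOp.aux_isField (fun z => ⟨(hconst z).choose, (hconst z).choose_spec.1⟩)
    L hmem).toField
  letI : Algebra ↥L (T ⊗[k] B) := f.toRingHom.toAlgebra
  have halg : ∀ z : ↥L, algebraMap ↥L (T ⊗[k] B) z = f z := fun z => rfl
  obtain ⟨x, hx, hδx⟩ := hconst m
  set c : ↥L := ⟨m ^ p, hx ▸ hmem x⟩ with hc
  have hcval : algebraMap ↥L M c = m ^ p := rfl
  set q : Polynomial ↥L := Polynomial.X ^ p - Polynomial.C c with hqdef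
  have hq_monic : q.Monic := Polynomial.monic_X_pow_sub_C c hp.out.ne_zero
  have haev : Polynomial.aeval m q = 0 := by
    rw [hqdef, map_sub, map_pow, Polynomial.aeval_X, Polynomial.aeval_C, hcval, sub_self]
  have hintegral : IsIntegral ↥L m := ⟨q, hq_monic, by rwa [Polynomial.aeval_def] at haev⟩
  have hnotpow : ∀ l : ↥L, l ^ p ≠ c := by
    intro l hl
    apply hm
    have h1 : (l : M) ^ p = m ^ p := congrArg Subtype.val hl
    have h2 : ((l : M) - m) ^ p = 0 := by rw [sub_pow_char, h1, sub_self]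
    have h3 : (l : M) = m := by
      have := pow_eq_zero_iff hp.out.ne_zero |>.mp h2
      exact sub_eq_zero.mp this
    rw [← h3]; exact l.2
  have hirr : Irreducible q := X_pow_sub_C_irreducible_of_prime hp.out hnotpow
  set pb := Algebra.adjoin.powerBasis hintegral with hpb
  have hgen : (⟨m, Algebra.self_mem_adjoin_singleton ↥L m⟩ : Algebra.adjoin ↥L {m}) = pb.gen := by
    rw [hpb, Algebra.adjoin.powerBasis_gen]
  haveI : Nontrivial ↥(Algebra.adjoin ↥L {m}) :=
    ⟨⟨0, 1, fun h => zero_ne_one (α := M) (congrArg Subtype.val h)⟩⟩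
  have hgenminpoly : minpoly ↥L pb.gen = q := by
    refine (minpoly.eq_of_irreducible_of_monic hirr ?_ hq_monic).symm
    have hval : (((Polynomial.aeval pb.gen) q : Algebra.adjoin ↥L {m}) : M) = 0 := by
      show (Algebra.adjoin ↥L {m}).val ((Polynomial.aeval pb.gen) q) = 0
      rw [← Polynomial.aeval_algHom_apply]
      rw [← hgen]
      exact haev
    exact Subtype.ext hval
  set α : T ⊗[k] B := (b m) ⊗ₜ[k] (1 : B) with hα
  have hfc : f c = α ^ p := by
    have h1 : f c = δK x := by
      have h2 := hKf x (hmem x)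
      rw [← h2]
      congr 1
      exact Subtype.ext hx.symm
    rw [h1, hδx, ← hb]
    show (b (algebraMap K M x)) ⊗ₜ[k] (1 : B) = α ^ p
    rw [hx, map_pow, hα, Algebra.TensorProduct.tmul_pow, one_pow]
  have haevα : Polynomial.aeval α (minpoly ↥L pb.gen) = 0 := by
    rw [hgenminpoly, hqdef, map_sub, map_pow, Polynomial.aeval_X, Polynomial.aeval_C, halg,
      hfc, sub_self]
  set g : Algebra.adjoin ↥L {m} →ₐ[↥L] T ⊗[k] B := pb.lift α haevα with hg
  have hgL : ∀ z : ↥L, g (algebraMap ↥L (Algebra.adjoin ↥L {m}) z) = f z := fun z => by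
    rw [g.commutes]; rfl
  have hggen : g ⟨m, Algebra.self_mem_adjoin_singleton ↥L m⟩ = α := by
    rw [hgen, hg]; exact pb.lift_gen α haevα
  have hcount : ∀ (y : M) (hy : y ∈ Algebra.adjoin ↥L {m}),
      BOp.counit k T B π (g ⟨y, hy⟩) = b y := by
    intro y hy
    induction hy using Algebra.adjoin_induction with
    | mem z hz =>
      have hz' : z = m := hz
      subst hz'
      have h0 : (⟨z, Algebra.subset_adjoin hz⟩ : Algebra.adjoin ↥L {z})
          = ⟨z, Algebra.self_mem_adjoin_singleton ↥L z⟩ := rfl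
      rw [h0, hggen, hα, BOp.counit_tmul_one]
    | algebraMap z =>
      have h1 : (⟨algebraMap ↥L M z, Subalgebra.algebraMap_mem _ z⟩ : Algebra.adjoin ↥L {m})
          = algebraMap ↥L (Algebra.adjoin ↥L {m}) z := rfl
      rw [h1, hgL]
      have h2 : algebraMap ↥L M z = (z : M) := rfl
      rw [h2]
      exact hcou z
    | add u v hu hv ihu ihv =>
      have h1 : (⟨u + v, add_mem hu hv⟩ : Algebra.adjoin ↥L {m}) = ⟨u, hu⟩ + ⟨v, hv⟩ := rfl
      rw [h1, map_add, map_add, ihu, ihv, map_add]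
    | mul u v hu hv ihu ihv =>
      have h1 : (⟨u * v, mul_mem hu hv⟩ : Algebra.adjoin ↥L {m}) = ⟨u, hu⟩ * ⟨v, hv⟩ := rfl
      rw [h1, map_mul, map_mul, ihu, ihv, map_mul]
  set L' : Subalgebra k M := (Algebra.adjoin ↥L {m}).restrictScalars k with hL'
  have hmem' : ∀ y : ↥L', (y : M) ∈ Algebra.adjoin ↥L {m} := fun y =>
    (Subalgebra.mem_restrictScalars k).1 y.2
  have adj_one : (⟨((1 : ↥L') : M), hmem' 1⟩ : Algebra.adjoin ↥L {m}) = 1 :=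
    Subtype.ext rfl
  have adj_zero : (⟨((0 : ↥L') : M), hmem' 0⟩ : Algebra.adjoin ↥L {m}) = 0 :=
    Subtype.ext rfl
  have adj_mul : ∀ u v : ↥L', (⟨((u * v : ↥L') : M), hmem' (u * v)⟩ : Algebra.adjoin ↥L {m})
      = ⟨(u : M), hmem' u⟩ * ⟨(v : M), hmem' v⟩ := fun u v => Subtype.ext rfl
  have adj_add : ∀ u v : ↥L', (⟨((u + v : ↥L') : M), hmem' (u + v)⟩ : Algebra.adjoin ↥L {m})
      = ⟨(u : M), hmem' u⟩ + ⟨(v : M), hmem' v⟩ := fun u v => Subtype.ext rfl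
  let f' : ↥L' →ₐ[k] T ⊗[k] B :=
  { toFun := fun y => g ⟨(y : M), hmem' y⟩
    map_one' := by
      show g ⟨((1 : ↥L') : M), hmem' 1⟩ = 1
      rw [adj_one]; exact map_one g
    map_mul' := fun u v => by
      show g ⟨((u * v : ↥L') : M), hmem' (u * v)⟩
        = g ⟨(u : M), hmem' u⟩ * g ⟨(v : M), hmem' v⟩
      rw [adj_mul u v]; exact map_mul g _ _
    map_zero' := by
      show g ⟨((0 : ↥L') : M), hmem' 0⟩ = 0
      rw [adj_zero]; exact map_zero g
    map_add' := fun u v => by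
      show g ⟨((u + v : ↥L') : M), hmem' (u + v)⟩
        = g ⟨(u : M), hmem' u⟩ + g ⟨(v : M), hmem' v⟩
      rw [adj_add u v]; exact map_add g _ _
    commutes' := fun r => by
      have h1 : (⟨((algebraMap k ↥L' r : ↥L') : M), hmem' _⟩ : Algebra.adjoin ↥L {m})
          = algebraMap ↥L (Algebra.adjoin ↥L {m}) (algebraMap k ↥L r) := by
        apply Subtype.ext
        show ((algebraMap k ↥L' r : ↥L') : M) = ((algebraMap ↥L (Algebra.adjoin ↥L {m})
          (algebraMap k ↥L r) : Algebra.adjoin ↥L {m}) : M)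
        rw [Subalgebra.coe_algebraMap, Subalgebra.coe_algebraMap]
        show algebraMap k M r = algebraMap ↥L M (algebraMap k ↥L r)
        rw [← IsScalarTower.algebraMap_apply]
      show g ⟨((algebraMap k ↥L' r : ↥L') : M), hmem' _⟩ = algebraMap k (T ⊗[k] B) r
      rw [h1, g.commutes, halg, f.commutes] }
  refine ⟨L', f', ?_, ?_, ?_, ?_⟩
  · exact (Subalgebra.mem_restrictScalars k).2 (Algebra.self_mem_adjoin_singleton ↥L m)
  · intro a ha
    refine (Subalgebra.mem_restrictScalars k).2 ?_
    have : algebraMap ↥L M ⟨a, ha⟩ ∈ Algebra.adjoin ↥L {m} :=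
      Subalgebra.algebraMap_mem _ (⟨a, ha⟩ : ↥L)
    exact this
  · intro a h h'
    show g ⟨a, hmem' ⟨a, h'⟩⟩ = f ⟨a, h⟩
    have h1 : (⟨a, hmem' ⟨a, h'⟩⟩ : Algebra.adjoin ↥L {m})
        = algebraMap ↥L (Algebra.adjoin ↥L {m}) ⟨a, h⟩ := rfl
    rw [h1, hgL]
  · intro y
    exact hcount y.1 (hmem' y)

end Aux


set_option maxHeartbeats 2000000 in
set_option synthInstance.maxHeartbeats 400000 in
/-- Let `k` be a field of characteristic `p > 0` and `B` a commutative `k`-algebra with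
`π : B → k` such that `x ^ p = 0` for all `x ∈ ker π`. Let `k ⊆ K ⊆ M` be a tower of fields,
`T` a `k`-algebra, and `δK : K → T ⊗[k] B` a `B`-operator such that `m ^ p` lies in `K` and in
the constants of `δK` for every `m ∈ M`. If `b : M → T` is a `k`-algebra homomorphism with
`b|_K = δK₀`, then there exists a `B`-operator `δM : M → T ⊗[k] B` (a lifting of `b`)
with `(id_T ⊗ π) ∘ δM = b` and `δM|_K = δK`. -/
theorem BOperator.lift_of_purely_inseparable
    (p : ℕ) [Fact p.Prime] (k : Type*) [Field k] [CharP k p]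
    (B : Type*) [CommRing B] [Algebra k B] (π : B →ₐ[k] k)
    (hπ : ∀ x ∈ RingHom.ker π, x ^ p = 0)
    (K M T : Type*) [Field K] [Field M] [CommRing T]
    [Algebra k K] [Algebra k M] [Algebra k T] [Algebra K M] [IsScalarTower k K M]
    (δK : K →ₐ[k] T ⊗[k] B)
    (hconst : ∀ m : M, ∃ x : K, algebraMap K M x = m ^ p ∧
      δK x = (((BOp.counit k T B π).comp δK) x) ⊗ₜ[k] (1 : B))
    (b : M →ₐ[k] T)
    (hb : b.comp (IsScalarTower.toAlgHom k K M) = (BOp.counit k T B π).comp δK) :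
    ∃ δM : M →ₐ[k] T ⊗[k] B,
      (BOp.counit k T B π).comp δM = b ∧
        δM.comp (IsScalarTower.toAlgHom k K M) = δK := by
  classical
  let P := {q : Σ L : Subalgebra k M, (↥L →ₐ[k] T ⊗[k] B) //
      (∀ x : K, ∃ h : algebraMap K M x ∈ q.1, q.2 ⟨algebraMap K M x, h⟩ = δK x) ∧
      (∀ y : q.1, BOp.counit k T B π (q.2 y) = b y)}
  letI : Preorder P :=
    { le := fun q r => ∀ a : M, ∀ h : a ∈ q.1.1, ∃ h' : a ∈ r.1.1, r.1.2 ⟨a, h'⟩ = q.1.2 ⟨a, h⟩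
      le_refl := fun q a h => ⟨h, rfl⟩
      le_trans := fun q r s hqr hrs a h => by
        obtain ⟨h1, e1⟩ := hqr a h
        obtain ⟨h2, e2⟩ := hrs a h1
        exact ⟨h2, e2.trans e1⟩ }
  have hKMinj : Function.Injective (algebraMap K M) := (algebraMap K M).injective
  let e0 : K ≃ₐ[k] (IsScalarTower.toAlgHom k K M).range :=
    AlgEquiv.ofInjective (IsScalarTower.toAlgHom k K M) hKMinj
  have base_cond1 : ∀ x : K, ∃ h : algebraMap K M x ∈ (IsScalarTower.toAlgHom k K M).range,
      (δK.comp e0.symm.toAlgHom) ⟨algebraMap K M x, h⟩ = δK x := by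
    intro x
    refine ⟨⟨x, rfl⟩, ?_⟩
    show δK (e0.symm ⟨algebraMap K M x, ⟨x, rfl⟩⟩) = δK x
    have h1 : (⟨algebraMap K M x, ⟨x, rfl⟩⟩ : (IsScalarTower.toAlgHom k K M).range) = e0 x := by
      apply Subtype.ext
      show algebraMap K M x = ((e0 x : (IsScalarTower.toAlgHom k K M).range) : M)
      rw [show e0 x = AlgEquiv.ofInjective (IsScalarTower.toAlgHom k K M) hKMinj x from rfl]
      rfl
    rw [h1, AlgEquiv.symm_apply_apply]
  have base_cond2 : ∀ y : (IsScalarTower.toAlgHom k K M).range,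
      BOp.counit k T B π ((δK.comp e0.symm.toAlgHom) y) = b y := by
    rintro ⟨ym, x, hx⟩
    have h1 : (⟨ym, ⟨x, hx⟩⟩ : (IsScalarTower.toAlgHom k K M).range) = e0 x := by
      apply Subtype.ext
      show ym = ((e0 x : (IsScalarTower.toAlgHom k K M).range) : M)
      rw [show e0 x = AlgEquiv.ofInjective (IsScalarTower.toAlgHom k K M) hKMinj x from rfl]
      exact hx.symm
    rw [h1]
    show BOp.counit k T B π (δK (e0.symm (e0 x))) = b (e0 x : M)
    rw [AlgEquiv.symm_apply_apply]
    have := AlgHom.congr_fun hb x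
    exact this.symm
  let base : P := ⟨⟨(IsScalarTower.toAlgHom k K M).range, δK.comp e0.symm.toAlgHom⟩,
    base_cond1, base_cond2⟩
  have bound : ∀ c : Set P, IsChain (· ≤ ·) c → BddAbove c := by
    intro c hc
    rcases Set.eq_empty_or_nonempty c with rfl | hne
    · exact ⟨base, fun r hr => hr.elim⟩
    haveI : Nonempty c := hne.to_subtype
    set KK : c → Subalgebra k M := fun i => i.1.1.1 with hKK
    have hmono : ∀ {i j : c}, i.1 ≤ j.1 → KK i ≤ KK j :=
      fun {i j} hij a ha => (hij a ha).choose
    have dir : Directed (· ≤ ·) KK := by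
      intro i j
      rcases hc.total i.2 j.2 with h | h
      · exact ⟨j, hmono h, le_refl _⟩
      · exact ⟨i, le_refl _, hmono h⟩
    set ff : ∀ i : c, ↥(KK i) →ₐ[k] T ⊗[k] B := fun i => i.1.1.2 with hff
    have hcompat : ∀ (i j : c) (h : KK i ≤ KK j), ff i = (ff j).comp (Subalgebra.inclusion h) := by
      intro i j hij
      ext z
      show ff i z = ff j (Subalgebra.inclusion hij z)
      rcases hc.total i.2 j.2 with h | h
      · obtain ⟨h', e⟩ := h z.1 z.2
        exact e.symm
      · obtain ⟨h', e⟩ := h z.1 (hij z.2)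
        exact e
    set F := Subalgebra.iSupLift KK dir ff hcompat (iSup KK) le_rfl with hF
    have hFmem : ∀ (i : c) (a : M) (ha : a ∈ KK i) (ha' : a ∈ iSup KK),
        F ⟨a, ha'⟩ = ff i ⟨a, ha⟩ := by
      intro i a ha ha'
      exact Subalgebra.iSupLift_of_mem (K := KK) (dir := dir) (f := ff) (hf := hcompat)
        (T := iSup KK) (hT := le_rfl) (i := i) (⟨a, ha'⟩ : ↥(iSup KK)) ha
    have cond1 : ∀ x : K, ∃ h : algebraMap K M x ∈ iSup KK, F ⟨algebraMap K M x, h⟩ = δK x := by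
      intro x
      set i0 : c := Classical.arbitrary c
      obtain ⟨h0, e0'⟩ := i0.1.2.1 x
      have hmem : algebraMap K M x ∈ iSup KK := (le_iSup KK i0) h0
      exact ⟨hmem, by rw [hFmem i0 _ h0 hmem]; exact e0'⟩
    have cond2 : ∀ y : ↥(iSup KK), BOp.counit k T B π (F y) = b y := by
      intro y
      have hy : (y : M) ∈ ⋃ i, (KK i : Set M) := by
        rw [← Subalgebra.coe_iSup_of_directed dir]; exact y.2
      obtain ⟨i, hi⟩ := Set.mem_iUnion.mp hy
      have h1 : F y = ff i ⟨y.1, hi⟩ := Subalgebra.iSupLift_of_mem (K := KK) (dir := dir)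
        (f := ff) (hf := hcompat) (T := iSup KK) (hT := le_rfl) (i := i) y hi
      rw [h1]
      exact i.1.2.2 ⟨y.1, hi⟩
    refine ⟨⟨⟨iSup KK, F⟩, cond1, cond2⟩, ?_⟩
    intro r hr a ha
    have ha' : a ∈ iSup KK := (le_iSup KK ⟨r, hr⟩) ha
    exact ⟨ha', hFmem ⟨r, hr⟩ a ha ha'⟩
  obtain ⟨qm, hqm⟩ := zorn_le bound
  have htop : ∀ z : M, z ∈ qm.1.1 := by
    by_contra hcon
    push_neg at hcon
    obtain ⟨m0, hm0⟩ := hcon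
    obtain ⟨L', f', hmL', hLL', hext, hcou'⟩ := BOp.step hconst hb qm.1.1 qm.1.2
      (fun x => (qm.2.1 x).choose)
      (fun x h => by obtain ⟨h', e⟩ := qm.2.1 x; exact e)
      qm.2.2 m0 hm0
    have cond1' : ∀ x : K, ∃ h : algebraMap K M x ∈ L', f' ⟨algebraMap K M x, h⟩ = δK x := by
      intro x
      obtain ⟨h, e⟩ := qm.2.1 x
      refine ⟨hLL' h, ?_⟩
      rw [hext _ h (hLL' h)]
      exact e
    have hle : qm ≤ (⟨⟨L', f'⟩, cond1', hcou'⟩ : P) :=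
      fun a ha => ⟨hLL' ha, hext a ha (hLL' ha)⟩
    obtain ⟨h, -⟩ := hqm hle m0 hmL'
    exact hm0 h
  let δM : M →ₐ[k] T ⊗[k] B :=
  { toFun := fun z => qm.1.2 ⟨z, htop z⟩
    map_one' := by
      show qm.1.2 ⟨(1 : M), htop 1⟩ = 1
      rw [show (⟨(1 : M), htop 1⟩ : qm.1.1) = 1 from Subtype.ext rfl]
      exact map_one qm.1.2
    map_mul' := fun u v => by
      show qm.1.2 ⟨u * v, htop _⟩ = qm.1.2 ⟨u, htop u⟩ * qm.1.2 ⟨v, htop v⟩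
      rw [show (⟨u * v, htop _⟩ : qm.1.1) = ⟨u, htop u⟩ * ⟨v, htop v⟩ from Subtype.ext rfl]
      exact map_mul _ _ _
    map_zero' := by
      show qm.1.2 ⟨(0 : M), htop 0⟩ = 0
      rw [show (⟨(0 : M), htop 0⟩ : qm.1.1) = 0 from Subtype.ext rfl]
      exact map_zero qm.1.2
    map_add' := fun u v => by
      show qm.1.2 ⟨u + v, htop _⟩ = qm.1.2 ⟨u, htop u⟩ + qm.1.2 ⟨v, htop v⟩
      rw [show (⟨u + v, htop _⟩ : qm.1.1) = ⟨u, htop u⟩ + ⟨v, htop v⟩ from Subtype.ext rfl]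
      exact map_add _ _ _
    commutes' := fun r => by
      show qm.1.2 ⟨algebraMap k M r, htop _⟩ = algebraMap k (T ⊗[k] B) r
      rw [show (⟨algebraMap k M r, htop _⟩ : qm.1.1) = algebraMap k qm.1.1 r from
        Subtype.ext rfl]
      exact qm.1.2.commutes r }
  refine ⟨δM, ?_, ?_⟩
  · ext z
    exact qm.2.2 ⟨z, htop z⟩
  · ext x
    obtain ⟨h, e⟩ := qm.2.1 x
    exact e
end

section
/- Let k be a field of characteristic p > 0 and B a finite-dimensional commutative k-algebra with a k-algebra homomorphism π : B → k such that x^p = 0 for every x ∈ ker π. Let k ⊆ K ⊆ L be a tower of fields and ∂ : K → K ⊗_k B a B-operator on K. Let R be an integral domain which is a finitely generated K-algebra, b : R → L an injective K-algebra homomorphism, Ω an algebraically closed field extension of L, and c : R → Ω ⊗_k B a k-algebra homomorphism such that c ∘ (K → R) = ι ∘ ∂ (where ι : K ⊗_k B → Ω ⊗_k B is induced by K ⊆ Ω) and (id_Ω ⊗ π) ∘ c equals the composition of b with the inclusion L ⊆ Ω. Then there exists a k-algebra homomorphism c' : R → L ⊗_k B such that c' ∘ (K → R) = ι' ∘ ∂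 (where ι' : K ⊗_k B → L ⊗_k B is induced by K ⊆ L) and (id_L ⊗ π) ∘ c' = b. -/
open TensorProduct

namespace BOpAux

lemma counit_tmul {k B : Type*} [Field k] [CommRing B] [Algebra k B] (π : B →ₐ[k] k)
    (T : Type*) [CommRing T] [Algebra k T] (t : T) (x : B) :
    BOp.counit k T B π (t ⊗ₜ[k] x) = π x • t := by
  simp [BOp.counit]

lemma nontrivialB {k B : Type*} [Field k] [CommRing B] [Algebra k B] (π : B →ₐ[k] k) :
    Nontrivial B := by
  refine ⟨1, 0, fun h => ?_⟩
  have : (1 : k) = 0 := by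
    calc (1:k) = π 1 := (map_one π).symm
    _ = π 0 := by rw [h]
    _ = 0 := map_zero π
  exact one_ne_zero this

lemma B_pow (p : ℕ) [Fact p.Prime] {k B : Type*} [Field k] [CharP k p] [CommRing B]
    [Algebra k B] (π : B →ₐ[k] k) (hπ : ∀ x ∈ RingHom.ker π, x ^ p = 0) (x : B) :
    x ^ p = algebraMap k B (π x ^ p) := by
  haveI : Nontrivial B := nontrivialB π
  haveI : CharP B p := charP_of_injective_algebraMap (algebraMap k B).injective p
  have hker : x - algebraMap k B (π x) ∈ RingHom.ker π := by
    simp [RingHom.mem_ker]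
  have h0 := hπ _ hker
  rw [sub_pow_char] at h0
  rw [sub_eq_zero.mp h0, map_pow]

lemma counit_injective_comp {k B : Type*} [Field k] [CommRing B] [Algebra k B]
    (π : B →ₐ[k] k) (C : Type*) [CommRing C] [Algebra k C] :
    Function.Injective (Algebra.TensorProduct.includeLeftRingHom : C →+* C ⊗[k] B) := by
  intro a b hab
  simp only [Algebra.TensorProduct.includeLeftRingHom_apply] at hab
  have := congrArg (BOp.counit k C B π) hab
  rw [counit_tmul, counit_tmul, map_one, one_smul, one_smul] at this
  exact this

lemma tensor_pow (p : ℕ) [Fact p.Prime] {k B : Type*} [Field k] [CharP k p] [CommRing B]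
    [Algebra k B] (π : B →ₐ[k] k) (hπ : ∀ x ∈ RingHom.ker π, x ^ p = 0)
    (C : Type*) [CommRing C] [Algebra k C] [Nontrivial C] (ξ : C ⊗[k] B) :
    ξ ^ p = ((BOp.counit k C B π ξ) ^ p) ⊗ₜ[k] (1 : B) := by
  haveI : Nontrivial B := nontrivialB π
  haveI : CharP C p := charP_of_injective_algebraMap (algebraMap k C).injective p
  haveI : Nontrivial (C ⊗[k] B) :=
    (counit_injective_comp π C).nontrivial
  haveI : CharP (C ⊗[k] B) p :=
    charP_of_injective_ringHom (counit_injective_comp (k := k) (B := B) π C) p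
  induction ξ using TensorProduct.induction_on with
  | zero => simp [zero_pow (Nat.Prime.ne_zero Fact.out)]
  | tmul t x =>
      rw [Algebra.TensorProduct.tmul_pow, counit_tmul, smul_pow,
        TensorProduct.smul_tmul, ← Algebra.algebraMap_eq_smul_one,
        B_pow p π hπ x]
  | add u v hu hv =>
      rw [add_pow_char, hu, hv, map_add, add_pow_char, TensorProduct.add_tmul]

lemma isUnit_of_counit_ne_zero (p : ℕ) [Fact p.Prime] {k B : Type*} [Field k] [CharP k p]
    [CommRing B] [Algebra k B] (π : B →ₐ[k] k) (hπ : ∀ x ∈ RingHom.ker π, x ^ p = 0)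
    (C : Type*) [Field C] [Algebra k C] (ξ : C ⊗[k] B)
    (h : BOp.counit k C B π ξ ≠ 0) : IsUnit ξ := by
  have hpow := tensor_pow p π hπ C ξ
  have hu : IsUnit (ξ ^ p) := by
    rw [hpow]
    refine IsUnit.of_mul_eq_one (((BOp.counit k C B π ξ) ^ p)⁻¹ ⊗ₜ[k] 1) ?_
    rw [Algebra.TensorProduct.tmul_mul_tmul, mul_one,
      mul_inv_cancel₀ (pow_ne_zero _ h)]
    rfl
  have hp1 : ξ ^ p = ξ ^ (p - 1) * ξ := by
    rw [← pow_succ, Nat.sub_add_cancel (Nat.Prime.one_lt Fact.out).le]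
  exact isUnit_of_mul_isUnit_right (hp1 ▸ hu)

end BOpAux

namespace BOpAux

lemma step (p : ℕ) [Fact p.Prime] {F A L' : Type*} [Field F] [CharP F p] [CommRing A]
    [CommRing L']
    (E : Subfield F) (φ : ↥E →+* A) (x : F) (hx : x ^ p ∈ E) (y : A)
    (hy : y ^ p = φ ⟨x ^ p, hx⟩)
    (ε : A →+* L') (β : F →+* L')
    (hεφ : ∀ z : ↥E, ε (φ z) = β ↑z) (hεy : ε y = β x) :
    ∃ (E' : Subfield F) (h : E ≤ E') (φ' : ↥E' →+* A),
      x ∈ E' ∧ (∀ (z : F) (hz : z ∈ E), φ' ⟨z, h hz⟩ = φ ⟨z, hz⟩) ∧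
      (∀ z : ↥E', ε (φ' z) = β ↑z) := by
  by_cases hxE : x ∈ E
  · exact ⟨E, le_refl E, φ, hxE, fun z hz => rfl, hεφ⟩
  letI : Algebra ↥E A := φ.toAlgebra
  set a : ↥E := ⟨x ^ p, hx⟩ with ha_def
  set g : Polynomial ↥E := Polynomial.X ^ p - Polynomial.C a with hg_def
  have ha : ∀ w : ↥E, w ^ p ≠ a := by
    intro w hw
    apply hxE
    have hcoe : ((w : F)) ^ p = x ^ p := congrArg Subtype.val hw
    have : ((w : F) - x) ^ p = 0 := by rw [sub_pow_char, hcoe, sub_self]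
    have hwx : (w : F) = x :=
      sub_eq_zero.mp ((pow_eq_zero_iff (Nat.Prime.ne_zero Fact.out)).mp this)
    exact hwx ▸ w.2
  have hirr : Irreducible g := X_pow_sub_C_irreducible_of_prime Fact.out ha
  letI := Fact.mk hirr
  have hgx : (Polynomial.aeval x) g = 0 := by
    simp only [hg_def, map_sub, map_pow, Polynomial.aeval_X, Polynomial.aeval_C]
    have : algebraMap (↥E) F a = x ^ p := rfl
    rw [this, sub_self]
  have hgy : (Polynomial.aeval y) g = 0 := by
    simp only [hg_def, map_sub, map_pow, Polynomial.aeval_X, Polynomial.aeval_C]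
    have : algebraMap (↥E) A a = φ a := rfl
    rw [this, ← hy, sub_self]
  set mF : AdjoinRoot g →ₐ[↥E] F := AdjoinRoot.liftAlgHom g (Algebra.ofId ↥E F) x hgx with hmF
  set mA : AdjoinRoot g →ₐ[↥E] A := AdjoinRoot.liftAlgHom g (Algebra.ofId ↥E A) y hgy with hmA
  set E' : Subfield F := (mF : AdjoinRoot g →+* F).fieldRange with hE'
  have hmFinj : Function.Injective mF := RingHom.injective (mF : AdjoinRoot g →+* F)
  set e2 : AdjoinRoot g →+* ↥E' := (mF : AdjoinRoot g →+* F).rangeRestrictField with he2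
  have he2coe : ∀ q, ((e2 q : ↥E') : F) = mF q := fun q => rfl
  have he2bij : Function.Bijective e2 := by
    constructor
    · intro q q' hqq'
      exact hmFinj (congrArg Subtype.val hqq')
    · rintro ⟨w, hw⟩
      obtain ⟨q, hq⟩ := RingHom.mem_fieldRange.mp hw
      exact ⟨q, Subtype.ext hq⟩
  set eq2 : AdjoinRoot g ≃+* ↥E' := RingEquiv.ofBijective e2 he2bij with heq2
  set φ' : ↥E' →+* A := (mA : AdjoinRoot g →+* A).comp eq2.symm.toRingHom with hφ'
  have hEE' : E ≤ E' := by
    intro z hz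
    refine RingHom.mem_fieldRange.mpr ⟨algebraMap (↥E) (AdjoinRoot g) ⟨z, hz⟩, ?_⟩
    exact mF.commutes ⟨z, hz⟩
  have hsymm : ∀ (q : AdjoinRoot g) (w : ↥E'), e2 q = w → eq2.symm w = q := by
    intro q w h
    have : eq2 q = w := h
    rw [← this, RingEquiv.symm_apply_apply]
  have hφ'A : ∀ q : AdjoinRoot g, ε (mA q) = β (mF q) := by
    letI : Algebra ↥E L' := (β.comp E.subtype).toAlgebra
    have halg : ∀ z : ↥E, algebraMap (↥E) L' z = β ↑z := fun z => rfl
    intro q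
    induction q using AdjoinRoot.induction_on with
    | ih poly =>
      rw [hmA, hmF]
      change ε (Polynomial.aeval y poly) = β (Polynomial.aeval x poly)
      induction poly using Polynomial.induction_on' with
      | add u v hu hv => rw [map_add, map_add, map_add, map_add, hu, hv]
      | monomial n z =>
          rw [Polynomial.aeval_monomial, Polynomial.aeval_monomial, map_mul, map_pow,
            map_mul, map_pow, hεy]
          congr 1
          exact hεφ z
  refine ⟨E', hEE', φ', ?_, ?_, ?_⟩
  · exact RingHom.mem_fieldRange.mpr ⟨AdjoinRoot.root g, AdjoinRoot.liftAlgHom_root (h := hgx)⟩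
  · intro z hz
    have h1 : eq2.symm ⟨z, hEE' hz⟩ = algebraMap (↥E) (AdjoinRoot g) ⟨z, hz⟩ := by
      apply hsymm
      exact Subtype.ext (mF.commutes ⟨z, hz⟩)
    show mA (eq2.symm ⟨z, hEE' hz⟩) = φ ⟨z, hz⟩
    rw [h1, mA.commutes]
    rfl
  · intro z
    obtain ⟨q, hq⟩ := he2bij.2 z
    have h1 : eq2.symm z = q := hsymm q z hq
    show ε (mA (eq2.symm z)) = β ↑z
    rw [h1, hφ'A q, ← hq]
    rfl

end BOpAux


set_option maxHeartbeats 1600000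
set_option synthInstance.maxHeartbeats 400000

/-- (Corollary 2.10, points formulation.) Let `k` have characteristic `p > 0` and `B` be a
finite-dimensional commutative `k`-algebra with `π : B → k` such that `x ^ p = 0` for all
`x ∈ ker π`. Let `k ⊆ K ⊆ L` be a tower of fields and `δ : K → K ⊗[k] B` a `B`-operator on
`K`. Let `R` be a domain, finitely generated as a `K`-algebra (the coordinate ring of a
`K`-variety `W`), `b : R → L` an injective `K`-algebra map (a generic `L`-point of `W`),
`Ω` an algebraically closed extension of `L`, and `c : R → Ω ⊗[k] B` a `k`-algebra map (an
`Ω`-point of `τ^δ(W)` above `b`) with `c ∘ (K → R) = ι ∘ δ` and `(id_Ω ⊗ π) ∘ c = (L ⊆ Ω) ∘ b`.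
Then there is a `k`-algebra map `c' : R → L ⊗[k] B` (an `L`-point of the fiber) with
`c' ∘ (K → R) = ι' ∘ δ` and `(id_L ⊗ π) ∘ c' = b`. -/
theorem BOperator.fiber_of_prolongation_has_rational_point
    (p : ℕ) [Fact p.Prime] (k : Type*) [Field k] [CharP k p]
    (B : Type*) [CommRing B] [Algebra k B] [FiniteDimensional k B] (π : B →ₐ[k] k)
    (hπ : ∀ x ∈ RingHom.ker π, x ^ p = 0)
    (K L Ω : Type*) [Field K] [Field L] [Field Ω]
    [Algebra k K] [Algebra k L] [Algebra k Ω]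
    [Algebra K L] [IsScalarTower k K L]
    [Algebra L Ω] [IsScalarTower k L Ω]
    [Algebra K Ω] [IsScalarTower k K Ω] [IsScalarTower K L Ω] [IsAlgClosed Ω]
    (δ : K →ₐ[k] K ⊗[k] B)
    (hδ0 : (BOp.counit k K B π).comp δ = AlgHom.id k K)
    (R : Type*) [CommRing R] [IsDomain R] [Algebra k R] [Algebra K R] [IsScalarTower k K R]
    [Algebra.FiniteType K R]
    (b : R →ₐ[K] L) (hb : Function.Injective b)
    (c : R →ₐ[k] Ω ⊗[k] B)
    (hcK : c.comp (IsScalarTower.toAlgHom k K R) =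
      (Algebra.TensorProduct.map (IsScalarTower.toAlgHom k K Ω) (AlgHom.id k B)).comp δ)
    (hcb : (BOp.counit k Ω B π).comp c =
      (IsScalarTower.toAlgHom k L Ω).comp (b.restrictScalars k)) :
    ∃ c' : R →ₐ[k] L ⊗[k] B,
      c'.comp (IsScalarTower.toAlgHom k K R) =
        (Algebra.TensorProduct.map (IsScalarTower.toAlgHom k K L) (AlgHom.id k B)).comp δ ∧
        (BOp.counit k L B π).comp c' = b.restrictScalars k := by
  classical
  -- abbreviations
  set ι' : K ⊗[k] B →ₐ[k] L ⊗[k] B :=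
    Algebra.TensorProduct.map (IsScalarTower.toAlgHom k K L) (AlgHom.id k B) with hι'
  set j : L ⊗[k] B →ₐ[k] Ω ⊗[k] B :=
    Algebra.TensorProduct.map (IsScalarTower.toAlgHom k L Ω) (AlgHom.id k B) with hjdef
  have hj_tmul : ∀ (t : L) (x : B), j (t ⊗ₜ[k] x) = algebraMap L Ω t ⊗ₜ[k] x := by
    intro t x; simp [hjdef]
  -- injectivity of j
  obtain ⟨ρ, hρ⟩ := (Algebra.linearMap L Ω).exists_leftInverse_of_injective (by
    rw [LinearMap.ker_eq_bot]; exact (algebraMap L Ω).injective)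
  have hρ' : ∀ t : L, ρ (algebraMap L Ω t) = t := fun t => LinearMap.congr_fun hρ t
  set Ψ : Ω ⊗[k] B →ₗ[k] L ⊗[k] B :=
    TensorProduct.map (ρ.restrictScalars k) (LinearMap.id : B →ₗ[k] B) with hΨdef
  have hΨj : ∀ z : L ⊗[k] B, Ψ (j z) = z := by
    intro z
    induction z using TensorProduct.induction_on with
    | zero => simp
    | tmul t x => rw [hj_tmul]; simp [hΨdef, hρ']
    | add u v hu hv => rw [map_add, map_add, hu, hv]
  have hj : Function.Injective j := by
    intro z w h
    rw [← hΨj z, ← hΨj w, h]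
  -- counit naturality for j
  have hjcounit : ∀ z : L ⊗[k] B,
      BOp.counit k Ω B π (j z) = algebraMap L Ω (BOp.counit k L B π z) := by
    intro z
    induction z using TensorProduct.induction_on with
    | zero => simp
    | tmul t x =>
        rw [hj_tmul, BOpAux.counit_tmul, BOpAux.counit_tmul, Algebra.smul_def,
          Algebra.smul_def, map_mul, ← IsScalarTower.algebraMap_apply]
    | add u v hu hv => rw [map_add, map_add, hu, hv, map_add, map_add]
  -- ι compatibility : map K→Ω = j ∘ ι'
  have hjι : ∀ w : K ⊗[k] B,
      (Algebra.TensorProduct.map (IsScalarTower.toAlgHom k K Ω) (AlgHom.id k B)) w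
        = j (ι' w) := by
    intro w
    induction w using TensorProduct.induction_on with
    | zero => simp
    | tmul t x =>
        rw [Algebra.TensorProduct.map_tmul]
        rw [hι', Algebra.TensorProduct.map_tmul, hj_tmul]
        simp [← IsScalarTower.algebraMap_apply]
    | add u v hu hv => rw [map_add, map_add, hu, hv, map_add]
  -- fraction field
  haveI : CharP R p := charP_of_injective_algebraMap (algebraMap k R).injective p
  set F := FractionRing R with hF
  haveI : CharP F p := charP_of_injective_ringHom (IsFractionRing.injective R F) p
  have hunits_b : ∀ y : nonZeroDivisors R, IsUnit ((b : R →+* L) y) := by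
    intro y
    refine isUnit_iff_ne_zero.mpr (fun h0 => ?_)
    have : (y : R) = 0 := hb (by simpa using h0)
    exact nonZeroDivisors.ne_zero y.2 this
  set bh : F →+* L := IsLocalization.lift (M := nonZeroDivisors R) hunits_b with hbh
  have hbhat : ∀ r : R, bh (algebraMap R F r) = b r := fun r =>
    IsLocalization.lift_eq hunits_b r
  have hunits_c : ∀ y : nonZeroDivisors R, IsUnit ((c : R →+* Ω ⊗[k] B) y) := by
    intro y
    have hεc : BOp.counit k Ω B π (c y) = algebraMap L Ω (b y) := by
      have := AlgHom.congr_fun hcb (y : R)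
      simpa using this
    refine BOpAux.isUnit_of_counit_ne_zero p π hπ Ω _ ?_
    show BOp.counit k Ω B π (c y) ≠ 0
    rw [hεc]
    intro h0
    have hby : (b y : L) = 0 := by
      apply (algebraMap L Ω).injective
      rw [h0, map_zero]
    have : (y : R) = 0 := hb (by rw [hby, map_zero])
    exact nonZeroDivisors.ne_zero y.2 this
  set ch : F →+* Ω ⊗[k] B := IsLocalization.lift (M := nonZeroDivisors R) hunits_c with hch
  have hchat : ∀ r : R, ch (algebraMap R F r) = c r := fun r =>
    IsLocalization.lift_eq hunits_c r
  -- counit of ch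
  have hcount : ∀ z : F, BOp.counit k Ω B π (ch z) = algebraMap L Ω (bh z) := by
    have : ((BOp.counit k Ω B π : Ω ⊗[k] B →+* Ω).comp ch)
        = (algebraMap L Ω).comp bh := by
      apply IsLocalization.ringHom_ext (nonZeroDivisors R)
      ext r
      simp only [RingHom.comp_apply, RingHom.coe_comp, Function.comp_apply]
      rw [hchat, hbhat]
      have := AlgHom.congr_fun hcb r
      simpa using this
    intro z
    exact RingHom.congr_fun this z
  have hpowF : ∀ z : F, ch z ^ p = j ((bh z ^ p) ⊗ₜ[k] (1 : B)) := by
    intro z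
    rw [BOpAux.tensor_pow p π hπ Ω (ch z), hcount, hj_tmul, map_pow]
  -- the subfield S'
  set jr : Subring (Ω ⊗[k] B) := (j : L ⊗[k] B →+* Ω ⊗[k] B).range with hjr
  set S0 : Subring F := jr.comap ch with hS0
  have hS0inv : ∀ x ∈ S0.carrier, x⁻¹ ∈ S0.carrier := by
    intro x hx
    by_cases hx0 : x = 0
    · rw [hx0, inv_zero]; exact S0.zero_mem
    obtain ⟨ζ, hζ⟩ := hx
    have hεζ : BOp.counit k L B π ζ ≠ 0 := by
      intro h0
      have : BOp.counit k Ω B π (ch x) = 0 := by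
        rw [← hζ]
        show BOp.counit k Ω B π (j ζ) = 0
        rw [hjcounit, h0, map_zero]
      rw [hcount] at this
      have : bh x = 0 := by
        apply (algebraMap L Ω).injective; rw [this, map_zero]
      exact hx0 (RingHom.injective bh |>.eq_iff.mp (by rw [this, map_zero]) )
    obtain ⟨ζ', hζ'⟩ := BOpAux.isUnit_of_counit_ne_zero p π hπ L ζ hεζ |>.exists_right_inv
    have hζ2 : j ζ = ch x := hζ
    refine ⟨ζ', ?_⟩
    have h1' : ch x⁻¹ * ch x = 1 := by
      rw [← map_mul, inv_mul_cancel₀ hx0, map_one]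
    have h3 : ch x * j ζ' = 1 := by
      rw [← hζ2, ← map_mul, hζ', map_one]
    have : j ζ' = ch x⁻¹ := by
      calc j ζ' = (ch x⁻¹ * ch x) * j ζ' := by rw [h1', one_mul]
      _ = ch x⁻¹ * (ch x * j ζ') := by ring
      _ = ch x⁻¹ := by rw [h3, mul_one]
    exact this
  set S' : Subfield F := { toSubring := S0, inv_mem' := hS0inv } with hS'
  -- φ₀ : S' → L⊗B
  have hjr_inj : Function.Injective ⇑(j : L ⊗[k] B →+* Ω ⊗[k] B).rangeRestrict := by
    intro u v huv
    apply hj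
    exact congrArg Subtype.val huv
  set e : (L ⊗[k] B) ≃+* ↥jr :=
    RingEquiv.ofBijective (j : L ⊗[k] B →+* Ω ⊗[k] B).rangeRestrict
      ⟨hjr_inj, RingHom.rangeRestrict_surjective _⟩ with he
  set g0 : ↥S' →+* ↥jr :=
    (ch.comp S'.subtype).codRestrict jr (fun x => x.2) with hg0
  set φ0 : ↥S' →+* L ⊗[k] B := e.symm.toRingHom.comp g0 with hφ0
  have hjφ0 : ∀ x : ↥S', j (φ0 x) = ch ↑x := by
    intro x
    have h1 : j (e.symm (g0 x)) = ((e (e.symm (g0 x)) : ↥jr) : Ω ⊗[k] B) := rfl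
    show j (e.symm (g0 x)) = ch ↑x
    rw [h1, RingEquiv.apply_symm_apply]
    rfl
  have hφ0counit : ∀ x : ↥S', BOp.counit k L B π (φ0 x) = bh ↑x := by
    intro x
    apply (algebraMap L Ω).injective
    rw [← hjcounit, hjφ0, hcount]
  have hFpS : ∀ z : F, z ^ p ∈ S' := by
    intro z
    show ch (z ^ p) ∈ jr
    rw [map_pow, hpowF]
    exact ⟨_, rfl⟩
  have hca : ∀ a : K, c (algebraMap K R a) =
      (Algebra.TensorProduct.map (IsScalarTower.toAlgHom k K Ω) (AlgHom.id k B)) (δ a) := by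
    intro a
    have := AlgHom.congr_fun hcK a
    simpa using this
  have hKS : ∀ a : K, algebraMap R F (algebraMap K R a) ∈ S' := by
    intro a
    show ch (algebraMap R F (algebraMap K R a)) ∈ jr
    rw [hchat, hca, hjι]
    exact ⟨_, rfl⟩
  have hφ0K : ∀ a : K, φ0 ⟨algebraMap R F (algebraMap K R a), hKS a⟩ = ι' (δ a) := by
    intro a
    apply hj
    rw [hjφ0]
    show ch (algebraMap R F (algebraMap K R a)) = j (ι' (δ a))
    rw [hchat, hca, hjι]
  -- main induction over a list of generators
  have main : ∀ l : List R, ∃ (E : Subfield F) (hE : S' ≤ E) (φ : ↥E →+* L ⊗[k] B),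
      (∀ (z : F) (hz : z ∈ S'), φ ⟨z, hE hz⟩ = φ0 ⟨z, hz⟩) ∧
      (∀ z : ↥E, BOp.counit k L B π (φ z) = bh ↑z) ∧
      (∀ r ∈ l, algebraMap R F r ∈ E) := by
    intro l
    induction l with
    | nil =>
        exact ⟨S', le_refl _, φ0, fun z hz => rfl, fun z => hφ0counit z, by simp⟩
    | cons r t ih =>
        obtain ⟨E, hE, φ, hext, hcou, hmem⟩ := ih
        set x : F := algebraMap R F r with hxdef
        have hxpS : x ^ p ∈ S' := hFpS x
        have hxp : x ^ p ∈ E := hE hxpS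
        have hyval : φ ⟨x ^ p, hxp⟩ = ((bh x) ^ p) ⊗ₜ[k] (1 : B) := by
          rw [hext _ hxpS]
          apply hj
          rw [hjφ0]
          show ch (x ^ p) = j (((bh x) ^ p) ⊗ₜ[k] (1 : B))
          rw [map_pow, hpowF]
        have hy : ((bh x) ⊗ₜ[k] (1 : B)) ^ p = φ ⟨x ^ p, hxp⟩ := by
          rw [Algebra.TensorProduct.tmul_pow, one_pow, hyval]
        have hεy : ((BOp.counit k L B π : L ⊗[k] B →ₐ[k] L) : L ⊗[k] B →+* L)
            ((bh x) ⊗ₜ[k] (1 : B)) = bh x := by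
          show BOp.counit k L B π ((bh x) ⊗ₜ[k] (1 : B)) = bh x
          rw [BOpAux.counit_tmul, map_one, one_smul]
        obtain ⟨E', hEE', φ', hxE', hext', hcou'⟩ :=
          BOpAux.step p E φ x hxp ((bh x) ⊗ₜ[k] (1 : B)) hy
            ((BOp.counit k L B π : L ⊗[k] B →ₐ[k] L) : L ⊗[k] B →+* L) bh
            (fun z => hcou z) hεy
        refine ⟨E', le_trans hE hEE', φ', ?_, ?_, ?_⟩
        · intro z hz
          exact ((hext' z (hE hz)).trans (hext z hz))
        · intro z; exact hcou' z
        · intro r' hr'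
          rcases List.mem_cons.mp hr' with h | h
          · rw [h]; exact hxE'
          · exact hEE' (hmem r' h)
  obtain ⟨s, hs⟩ := (inferInstance : Algebra.FiniteType K R).out
  obtain ⟨Estar, hEstar, φstar, hextstar, hcoustar, hmemstar⟩ := main s.toList
  have hall : ∀ r : R, algebraMap R F r ∈ Estar := by
    have hT : ∀ (T : Subalgebra K R), (↑s : Set R) ⊆ T → Algebra.adjoin K (↑s : Set R) ≤ T :=
      fun T h => Algebra.adjoin_le h
    set T : Subalgebra K R :=
      { carrier := { r : R | algebraMap R F r ∈ Estar }
        mul_mem' := fun {u} {v} hu hv => by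
          simp only [Set.mem_setOf_eq, map_mul] at *
          exact Estar.mul_mem hu hv
        add_mem' := fun {u} {v} hu hv => by
          simp only [Set.mem_setOf_eq, map_add] at *
          exact Estar.add_mem hu hv
        one_mem' := by
          simp only [Set.mem_setOf_eq, map_one]
          exact Estar.one_mem
        zero_mem' := by
          simp only [Set.mem_setOf_eq, map_zero]
          exact Estar.zero_mem
        algebraMap_mem' := fun a => hEstar (hKS a) } with hTdef
    intro r
    have hmemT : r ∈ T := by
      have h1 : r ∈ Algebra.adjoin K (↑s : Set R) := by rw [hs]; trivial
      exact hT T (fun r' hr' => hmemstar r' (Finset.mem_toList.mpr hr')) h1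
    exact hmemT
  have hKcond : ∀ a : K, φstar ⟨algebraMap R F (algebraMap K R a), hall _⟩ = ι' (δ a) :=
    fun a => (hextstar _ (hKS a)).trans (hφ0K a)
  refine ⟨{ toFun := fun r => φstar ⟨algebraMap R F r, hall r⟩
            map_one' := by
              show φstar ⟨algebraMap R F 1, hall 1⟩ = 1
              rw [show (⟨algebraMap R F 1, hall 1⟩ : ↥Estar) = 1 from
                Subtype.ext (map_one _), map_one]
            map_mul' := fun r t => by
              show φstar ⟨algebraMap R F (r*t), hall _⟩
                = φstar ⟨algebraMap R F r, hall r⟩ * φstar ⟨algebraMap R F t, hall t⟩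
              rw [show (⟨algebraMap R F (r*t), hall _⟩ : ↥Estar)
                  = ⟨algebraMap R F r, hall r⟩ * ⟨algebraMap R F t, hall t⟩ from
                  Subtype.ext (map_mul _ r t), map_mul]
            map_zero' := by
              show φstar ⟨algebraMap R F 0, hall 0⟩ = 0
              rw [show (⟨algebraMap R F 0, hall 0⟩ : ↥Estar) = 0 from
                Subtype.ext (map_zero _), map_zero]
            map_add' := fun r t => by
              show φstar ⟨algebraMap R F (r+t), hall _⟩
                = φstar ⟨algebraMap R F r, hall r⟩ + φstar ⟨algebraMap R F t, hall t⟩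
              rw [show (⟨algebraMap R F (r+t), hall _⟩ : ↥Estar)
                  = ⟨algebraMap R F r, hall r⟩ + ⟨algebraMap R F t, hall t⟩ from
                  Subtype.ext (map_add _ r t), map_add]
            commutes' := fun a => by
              show φstar ⟨algebraMap R F (algebraMap k R a), hall _⟩ = algebraMap k (L ⊗[k] B) a
              have h2 : (⟨algebraMap R F (algebraMap k R a), hall _⟩ : ↥Estar)
                  = ⟨algebraMap R F (algebraMap K R (algebraMap k K a)), hall _⟩ :=
                Subtype.ext (by rw [IsScalarTower.algebraMap_apply k K R a])
              rw [h2, hKcond (algebraMap k K a), AlgHom.commutes δ]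
              exact ι'.commutes a }, ?_, ?_⟩
  · apply AlgHom.ext
    intro a
    show φstar ⟨algebraMap R F (algebraMap K R a), hall _⟩ = ι' (δ a)
    exact hKcond a
  · apply AlgHom.ext
    intro r
    show BOp.counit k L B π (φstar ⟨algebraMap R F r, hall r⟩) = b r
    exact (hcoustar ⟨algebraMap R F r, hall r⟩).trans (hbhat r)
end

section
/- Let k be a field, B a commutative k-algebra with a k-algebra homomorphism π : B → k, K a field extension of k with a B-operator ∂ : K → K ⊗_k B, and let V be a K-subspace of a K-vector space W. Let D : V → W ⊗_k B be a ∂-operator, i.e. an additive map with D(α • v) = ∂(α) · D(v) for α ∈ K, v ∈ V, where W ⊗_k B is regarded as a module over K ⊗_k B via the natural isomorphism W ⊗_k B ≅ W ⊗_K (K ⊗_k B). Then for every n ∈ ℕ there exists a ∂-operator Λ : ⋀^n_K V → (⋀^n_K W) ⊗_k B (additive with Λ(α • x) = ∂(α) · Λ(x)) such that whenever v₁, …, vₙ ∈ V satisfy D(vᵢ) = vᵢ ⊗ 1_B for all i, one has Λ(v₁ ∧ … ∧ vₙ) = (v₁ ∧ … ∧ vₙ) ⊗ 1_B, where on the right the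 wedge is taken in ⋀^n_K W via the inclusion V ⊆ W. -/
open TensorProduct

/-- The natural action of `K ⊗[k] B` on `W ⊗[k] B` (coming from the identification
`W ⊗[k] B ≅ W ⊗[K] (K ⊗[k] B)`), determined by `(α ⊗ b) • (w ⊗ c) = (α • w) ⊗ (b * c)`. -/
noncomputable def BOp.act (k K B : Type*) [Field k] [Field K] [Algebra k K]
    [CommRing B] [Algebra k B] (W : Type*) [AddCommGroup W] [Module k W] [Module K W]
    [IsScalarTower k K W] :
    (K ⊗[k] B) →ₗ[k] (W ⊗[k] B) →ₗ[k] (W ⊗[k] B) :=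
  TensorProduct.curry <|
    (TensorProduct.map
      (TensorProduct.lift
        { toFun := fun α => α • (LinearMap.id : W →ₗ[k] W)
          map_add' := fun a b => add_smul a b _
          map_smul' := fun a b => smul_assoc a b _ })
      (LinearMap.mul' k B)).comp
      (TensorProduct.tensorTensorTensorComm k K B W B).toLinearMap

namespace BOpAux
noncomputable section
variable (k K B : Type*) [Field k] [Field K] [Algebra k K] [CommRing B] [Algebra k B]
  (W : Type*) [AddCommGroup W] [Module k W] [Module K W] [IsScalarTower k K W]

@[simp] lemma act_tmul (α : K) (b : B) (w : W) (c : B) :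
    BOp.act k K B W (α ⊗ₜ[k] b) (w ⊗ₜ[k] c) = (α • w) ⊗ₜ[k] (b * c) := by
  simp [BOp.act]

lemma act_one (x : W ⊗[k] B) : BOp.act k K B W 1 x = x := by
  have h1 : (1 : K ⊗[k] B) = (1 : K) ⊗ₜ[k] (1 : B) := rfl
  induction x using TensorProduct.induction_on with
  | zero => simp
  | tmul w c => rw [h1, act_tmul]; simp
  | add x y hx hy => rw [map_add, hx, hy]

lemma act_mul (u v : K ⊗[k] B) (x : W ⊗[k] B) :
    BOp.act k K B W (u * v) x = BOp.act k K B W u (BOp.act k K B W v x) := by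
  induction u using TensorProduct.induction_on with
  | zero => simp
  | add u u' hu hu' => simp only [add_mul, map_add, LinearMap.add_apply, hu, hu']
  | tmul α b =>
    induction v using TensorProduct.induction_on with
    | zero => simp
    | add v v' hv hv' => simp only [mul_add, map_add, LinearMap.add_apply, hv, hv']
    | tmul β c =>
      induction x using TensorProduct.induction_on with
      | zero => simp
      | add x y hx hy => simp only [map_add, hx, hy]
      | tmul w d =>
        rw [Algebra.TensorProduct.tmul_mul_tmul, act_tmul, act_tmul, act_tmul,
          mul_smul, mul_assoc]

/-- Type synonym carrying the `δ`-twisted `K`-module structure on `W ⊗[k] B`. -/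
def TwM (δ : K →ₐ[k] K ⊗[k] B) : Type _ := W ⊗[k] B

variable (δ : K →ₐ[k] K ⊗[k] B)

instance : AddCommGroup (TwM k K B W δ) := inferInstanceAs (AddCommGroup (W ⊗[k] B))

instance : Module K (TwM k K B W δ) where
  smul α x := BOp.act k K B W (δ α) x
  one_smul x := by show BOp.act k K B W (δ 1) x = x; erw [map_one, act_one]
  mul_smul α β x := by
    show BOp.act k K B W (δ (α * β)) x
      = BOp.act k K B W (δ α) (BOp.act k K B W (δ β) x)
    erw [map_mul, act_mul]
  smul_zero α := map_zero _
  smul_add α x y := map_add _ _ _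
  add_smul α β x := by
    show BOp.act k K B W (δ (α + β)) x
      = BOp.act k K B W (δ α) x + BOp.act k K B W (δ β) x
    erw [map_add, map_add, LinearMap.add_apply]
  zero_smul x := by
    show BOp.act k K B W (δ 0) x = 0
    erw [map_zero, map_zero, LinearMap.zero_apply]

lemma twM_smul (α : K) (x : TwM k K B W δ) :
    α • x = BOp.act k K B W (δ α) (x : W ⊗[k] B) := rfl

/-- `ι ⊗ id : W ⊗ B → Λ(W) ⊗ B`. -/
def jmap : W ⊗[k] B →ₗ[k] ExteriorAlgebra K W ⊗[k] B :=
  LinearMap.rTensor B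
    ((ExteriorAlgebra.ι K (M := W)).restrictScalars k)

@[simp] lemma jmap_tmul (w : W) (b : B) :
    jmap k K B W (w ⊗ₜ[k] b) = ExteriorAlgebra.ι K w ⊗ₜ[k] b := rfl

/-- `K ⊗ B → Λ(W) ⊗ B` as a `k`-algebra map. -/
def phi : K ⊗[k] B →ₐ[k] ExteriorAlgebra K W ⊗[k] B :=
  Algebra.TensorProduct.map (IsScalarTower.toAlgHom k K (ExteriorAlgebra K W)) (AlgHom.id k B)

@[simp] lemma phi_tmul (α : K) (b : B) :
    phi k K B W (α ⊗ₜ[k] b) = algebraMap K (ExteriorAlgebra K W) α ⊗ₜ[k] b := rfl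

lemma phi_central (u : K ⊗[k] B) (y : ExteriorAlgebra K W ⊗[k] B) :
    phi k K B W u * y = y * phi k K B W u := by
  induction u using TensorProduct.induction_on with
  | zero => simp
  | add u u' hu hu' => simp only [map_add, add_mul, mul_add, hu, hu']
  | tmul α b =>
    induction y using TensorProduct.induction_on with
    | zero => simp
    | add y y' hy hy' => simp only [add_mul, mul_add, hy, hy']
    | tmul a c =>
      rw [phi_tmul, Algebra.TensorProduct.tmul_mul_tmul,
        Algebra.TensorProduct.tmul_mul_tmul, Algebra.commutes α a, mul_comm b c]

lemma jmap_swap (x y : W ⊗[k] B) :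
    jmap k K B W x * jmap k K B W y + jmap k K B W y * jmap k K B W x = 0 := by
  induction x using TensorProduct.induction_on with
  | zero => simp
  | add x x' hx hx' =>
    rw [map_add, add_mul, mul_add]
    calc jmap k K B W x * jmap k K B W y + jmap k K B W x' * jmap k K B W y +
          (jmap k K B W y * jmap k K B W x + jmap k K B W y * jmap k K B W x')
        = (jmap k K B W x * jmap k K B W y + jmap k K B W y * jmap k K B W x) +
          (jmap k K B W x' * jmap k K B W y + jmap k K B W y * jmap k K B W x') := by abel
      _ = 0 := by rw [hx, hx', add_zero]
  | tmul w b =>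
    induction y using TensorProduct.induction_on with
    | zero => simp
    | add y y' hy hy' =>
      rw [map_add, mul_add, add_mul]
      calc jmap k K B W (w ⊗ₜ[k] b) * jmap k K B W y +
            jmap k K B W (w ⊗ₜ[k] b) * jmap k K B W y' +
            (jmap k K B W y * jmap k K B W (w ⊗ₜ[k] b) +
              jmap k K B W y' * jmap k K B W (w ⊗ₜ[k] b))
          = (jmap k K B W (w ⊗ₜ[k] b) * jmap k K B W y +
              jmap k K B W y * jmap k K B W (w ⊗ₜ[k] b)) +
            (jmap k K B W (w ⊗ₜ[k] b) * jmap k K B W y' +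
              jmap k K B W y' * jmap k K B W (w ⊗ₜ[k] b)) := by abel
        _ = 0 := by rw [hy, hy', add_zero]
    | tmul v c =>
      rw [jmap_tmul, jmap_tmul, Algebra.TensorProduct.tmul_mul_tmul,
        Algebra.TensorProduct.tmul_mul_tmul, mul_comm c b, ← TensorProduct.add_tmul,
        ExteriorAlgebra.ι_add_mul_swap, TensorProduct.zero_tmul]

lemma jmap_sq (x : W ⊗[k] B) : jmap k K B W x * jmap k K B W x = 0 := by
  induction x using TensorProduct.induction_on with
  | zero => simp
  | tmul w b =>
    rw [jmap_tmul, Algebra.TensorProduct.tmul_mul_tmul, ExteriorAlgebra.ι_sq_zero,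
      TensorProduct.zero_tmul]
  | add x y hx hy =>
    rw [map_add, add_mul, mul_add, mul_add, hx, hy]
    have := jmap_swap k K B W x y
    rw [zero_add, add_zero, this]

lemma jmap_act (u : K ⊗[k] B) (x : W ⊗[k] B) :
    jmap k K B W (BOp.act k K B W u x) = phi k K B W u * jmap k K B W x := by
  induction u using TensorProduct.induction_on with
  | zero => simp
  | add u u' hu hu' => simp only [map_add, LinearMap.add_apply, add_mul, hu, hu']
  | tmul α b =>
    induction x using TensorProduct.induction_on with
    | zero => simp
    | add x y hx hy => simp only [map_add, hx, hy, mul_add]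
    | tmul w c =>
      rw [act_tmul, jmap_tmul, jmap_tmul, phi_tmul, Algebra.TensorProduct.tmul_mul_tmul,
        map_smul, ← Algebra.smul_def]

/-- Inclusion `(⋀^n W) ⊗ B → Λ(W) ⊗ B`. -/
def incl (n : ℕ) : (⋀[K]^n W) ⊗[k] B →ₗ[k] ExteriorAlgebra K W ⊗[k] B :=
  LinearMap.rTensor B (((⋀[K]^n W).subtype).restrictScalars k)

@[simp] lemma incl_tmul (n : ℕ) (z : ⋀[K]^n W) (b : B) :
    incl k K B W n (z ⊗ₜ[k] b) = (z : ExteriorAlgebra K W) ⊗ₜ[k] b := rfl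

lemma incl_inj (n : ℕ) : Function.Injective (incl k K B W n) :=
  Module.Flat.rTensor_preserves_injective_linearMap _ (fun _ _ h => Subtype.ext h)

lemma incl_act (n : ℕ) (u : K ⊗[k] B) (z : (⋀[K]^n W) ⊗[k] B) :
    incl k K B W n (BOp.act k K B (⋀[K]^n W) u z)
      = phi k K B W u * incl k K B W n z := by
  induction u using TensorProduct.induction_on with
  | zero => simp
  | add u u' hu hu' => simp only [map_add, LinearMap.add_apply, add_mul, hu, hu']
  | tmul α b =>
    induction z using TensorProduct.induction_on with
    | zero => simp
    | add z z' hz hz' => simp only [map_add, hz, hz', mul_add]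
    | tmul m c =>
      rw [act_tmul, incl_tmul, incl_tmul, phi_tmul, Algebra.TensorProduct.tmul_mul_tmul,
        Submodule.coe_smul, ← Algebra.smul_def]

lemma mul_mem_incl (n : ℕ) (x : W ⊗[k] B) {y : ExteriorAlgebra K W ⊗[k] B}
    (hy : y ∈ LinearMap.range (incl k K B W n)) :
    jmap k K B W x * y ∈ LinearMap.range (incl k K B W (n + 1)) := by
  induction x using TensorProduct.induction_on with
  | zero => rw [map_zero, zero_mul]; exact zero_mem _
  | add x x' hx hx' => rw [map_add, add_mul]; exact add_mem hx hx'
  | tmul w b =>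
    obtain ⟨z, rfl⟩ := hy
    induction z using TensorProduct.induction_on with
    | zero => rw [map_zero, mul_zero]; exact zero_mem _
    | add z z' hz hz' => rw [map_add, mul_add]; exact add_mem hz hz'
    | tmul m c =>
      rw [jmap_tmul, incl_tmul, Algebra.TensorProduct.tmul_mul_tmul]
      have hmem : ExteriorAlgebra.ι K w * (m : ExteriorAlgebra K W) ∈ ⋀[K]^(n+1) W := by
        have hps : (⋀[K]^(n+1) W)
            = LinearMap.range (ExteriorAlgebra.ι K (M := W)) * ⋀[K]^n W := pow_succ' _ _
        rw [hps]
        exact Submodule.mul_mem_mul (LinearMap.mem_range_self _ w) m.2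
      exact ⟨⟨_, hmem⟩ ⊗ₜ[k] (b * c), rfl⟩

lemma prod_mem (n : ℕ) (x : Fin n → W ⊗[k] B) :
    (List.ofFn fun i => jmap k K B W (x i)).prod ∈ LinearMap.range (incl k K B W n) := by
  induction n with
  | zero =>
    rw [List.ofFn_zero, List.prod_nil]
    have h1 : (1 : ExteriorAlgebra K W) ∈ ⋀[K]^0 W := by
      have := ExteriorAlgebra.ιMulti_range K 0 (M := W)
        (Set.mem_range_self (fun i : Fin 0 => (0 : W)))
      rwa [ExteriorAlgebra.ιMulti_zero_apply] at this
    exact ⟨(⟨1, h1⟩ : ⋀[K]^0 W) ⊗ₜ[k] (1 : B), rfl⟩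
  | succ n ih =>
    rw [List.ofFn_succ, List.prod_cons]
    exact mul_mem_incl k K B W n (x 0) (ih fun i => x i.succ)

lemma jmap_mul_prod_list {n : ℕ} (f : Fin n → W ⊗[k] B) (i : Fin n) :
    jmap k K B W (f i) * (List.ofFn fun i => jmap k K B W (f i)).prod = 0 := by
  induction n with
  | zero => exact i.elim0
  | succ n hn =>
    rw [List.ofFn_succ, List.prod_cons, ← mul_assoc]
    by_cases h : i = 0
    · rw [h, jmap_sq, zero_mul]
    · replace hn :=
        congr_arg (jmap k K B W (f 0) * ·) <| hn (fun i => f <| Fin.succ i) (i.pred h)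
      rw [Fin.succ_pred, ← mul_assoc, mul_zero] at hn
      refine (eq_zero_iff_eq_zero_of_add_eq_zero ?_).mp hn
      rw [← add_mul, jmap_swap, zero_mul]

lemma prod_eq_zero {n : ℕ} (f : Fin n → W ⊗[k] B) (x y : Fin n)
    (hfxy : f x = f y) (hxy : x ≠ y) :
    (List.ofFn fun i => jmap k K B W (f i)).prod = 0 := by
  wlog h : x < y
  · exact this k K B W f y x hfxy.symm hxy.symm (hxy.lt_or_gt.resolve_left h)
  clear hxy
  induction n with
  | zero => exact x.elim0
  | succ n hn =>
    rw [List.ofFn_succ, List.prod_cons]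
    by_cases hx : x = 0
    · rw [hx] at hfxy h
      rw [hfxy, ← Fin.succ_pred y (ne_of_lt h).symm]
      exact jmap_mul_prod_list k K B W (f ∘ Fin.succ) _
    · convert mul_zero (jmap k K B W (f 0))
      refine hn (fun i => f <| Fin.succ i) (x.pred hx)
        (y.pred (ne_of_lt <| lt_of_le_of_lt x.zero_le h).symm) ?_
        (Fin.pred_lt_pred_iff.mpr h)
      simp only [Fin.succ_pred]
      exact hfxy

lemma prod_update {n : ℕ} (q : Fin n → ExteriorAlgebra K W ⊗[k] B) (i : Fin n)
    (c : ExteriorAlgebra K W ⊗[k] B) (hc : ∀ y, c * y = y * c) :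
    (List.ofFn (Function.update q i (c * q i))).prod = c * (List.ofFn q).prod := by
  induction n with
  | zero => exact i.elim0
  | succ n ih =>
    induction i using Fin.cases with
    | zero =>
      rw [List.ofFn_succ, List.ofFn_succ (f := q), List.prod_cons, List.prod_cons,
        Function.update_self]
      have htail : (fun t : Fin n => Function.update q 0 (c * q 0) t.succ)
          = fun t : Fin n => q t.succ := by
        funext t
        exact Function.update_of_ne (Fin.succ_ne_zero t) _ _
      rw [htail, mul_assoc]
    | succ i =>
      rw [List.ofFn_succ, List.ofFn_succ (f := q), List.prod_cons, List.prod_cons,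
        Function.update_of_ne (Fin.succ_ne_zero i).symm]
      have htail : (fun t : Fin n => Function.update q i.succ (c * q i.succ) t.succ)
          = Function.update (fun t : Fin n => q t.succ) i (c * q i.succ) := by
        funext t
        by_cases ht : t = i
        · subst ht; rw [Function.update_self, Function.update_self]
        · rw [Function.update_of_ne (fun hh => ht (Fin.succ_injective n hh)),
            Function.update_of_ne ht]
      rw [htail, ih (fun t => q t.succ) i, ← mul_assoc, ← hc (q 0), mul_assoc]

/-- The `n`-fold product `(x₁, …, xₙ) ↦ j(x₁) ⋯ j(xₙ)` as a `k`-multilinear map. -/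
def P (n : ℕ) : MultilinearMap k (fun _ : Fin n => W ⊗[k] B) (ExteriorAlgebra K W ⊗[k] B) :=
  (MultilinearMap.mkPiAlgebraFin k n _).compLinearMap (fun _ => jmap k K B W)

lemma P_apply (n : ℕ) (x : Fin n → W ⊗[k] B) :
    P k K B W n x = (List.ofFn fun i => jmap k K B W (x i)).prod := by
  simp [P, MultilinearMap.mkPiAlgebraFin_apply, Function.comp]

/-- The wedge of `n` elements of `W ⊗ B`, landing in `(⋀^n W) ⊗ B`. -/
def wedgeFun (n : ℕ) (x : Fin n → W ⊗[k] B) : (⋀[K]^n W) ⊗[k] B :=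
  (LinearEquiv.ofInjective (incl k K B W n) (incl_inj k K B W n)).symm
    ⟨P k K B W n x, by rw [P_apply]; exact prod_mem k K B W n x⟩

lemma incl_wedgeFun (n : ℕ) (x : Fin n → W ⊗[k] B) :
    incl k K B W n (wedgeFun k K B W n x) = P k K B W n x :=
  LinearEquiv.ofInjective_symm_apply (f := incl k K B W n)
    (h := incl_inj k K B W n)
    ⟨P k K B W n x, by rw [P_apply]; exact prod_mem k K B W n x⟩

lemma P_update_act (δ : K →ₐ[k] K ⊗[k] B) (n : ℕ) [inst : DecidableEq (Fin n)]
    (m : Fin n → TwM k K B W δ) (i : Fin n)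
    (u : K ⊗[k] B) (a : TwM k K B W δ) :
    P k K B W n (Function.update m i (BOp.act k K B W u a))
      = phi k K B W u * P k K B W n (Function.update m i a) := by
  rw [Subsingleton.elim inst (instDecidableEqFin n)]
  clear inst
  rw [P_apply, P_apply]
  have h1 : (fun t => jmap k K B W (Function.update m i (BOp.act k K B W u a) t))
      = Function.update (fun t => jmap k K B W (m t)) i
          (jmap k K B W (BOp.act k K B W u a)) := by
    funext t
    by_cases ht : t = i
    · subst ht; erw [Function.update_self, Function.update_self]
    · erw [Function.update_of_ne ht, Function.update_of_ne ht]
  have h2 : (fun t => jmap k K B W (Function.update m i a t))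
      = Function.update (fun t => jmap k K B W (m t)) i (jmap k K B W a) := by
    funext t
    by_cases ht : t = i
    · subst ht; erw [Function.update_self, Function.update_self]
    · erw [Function.update_of_ne ht, Function.update_of_ne ht]
  erw [h1, h2, jmap_act]
  have h3 : Function.update (fun t => jmap k K B W (m t)) i
        (phi k K B W u * jmap k K B W a)
      = Function.update (Function.update (fun t => jmap k K B W (m t)) i (jmap k K B W a)) i
        (phi k K B W u *
          (Function.update (fun t => jmap k K B W (m t)) i (jmap k K B W a)) i) := by
    rw [Function.update_self, Function.update_idem]
  rw [h3, prod_update]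
  exact fun y => phi_central k K B W u y

/-- The wedge as an alternating map over the twisted `K`-structures. -/
def wedgeAlt (δ : K →ₐ[k] K ⊗[k] B) (n : ℕ) :
    (TwM k K B W δ) [⋀^Fin n]→ₗ[K] (TwM k K B (⋀[K]^n W) δ) where
  toFun := wedgeFun k K B W n
  map_update_add' m i a b := by
    apply incl_inj k K B W n
    erw [map_add, incl_wedgeFun, incl_wedgeFun, incl_wedgeFun]
    exact (P k K B W n).map_update_add m i a b
  map_update_smul' m i α a := by
    apply incl_inj k K B W n
    erw [twM_smul, twM_smul, incl_act, incl_wedgeFun, incl_wedgeFun, P_update_act]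
    rfl
  map_eq_zero_of_eq' v i j h hne := by
    apply incl_inj k K B W n
    have h0 : incl k K B W n (0 : TwM k K B (⋀[K]^n W) δ) = 0 := map_zero _
    erw [h0, incl_wedgeFun, P_apply]
    exact prod_eq_zero k K B W v i j h hne

lemma prod_tmul_one (n : ℕ) (g : Fin n → ExteriorAlgebra K W) :
    (List.ofFn fun i => (g i ⊗ₜ[k] (1 : B) : ExteriorAlgebra K W ⊗[k] B)).prod
      = (List.ofFn g).prod ⊗ₜ[k] (1 : B) := by
  induction n with
  | zero =>
    rw [List.ofFn_zero, List.ofFn_zero, List.prod_nil, List.prod_nil,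
      Algebra.TensorProduct.one_def]
  | succ n ih =>
    rw [List.ofFn_succ, List.ofFn_succ (f := g), List.prod_cons, List.prod_cons,
      ih (fun i => g i.succ), Algebra.TensorProduct.tmul_mul_tmul, one_mul]

end
end BOpAux

/-- (Lemma 4.4: exterior powers of `∂`-operators.) Let `(K, δ)` be a `B`-field extending `k`,
`V` a `K`-subspace of a `K`-vector space `W`, and `D : V → W ⊗[k] B` a `δ`-operator (an
additive map with `D (α • v) = δ(α) • D v`). Then for every `n` there is a `δ`-operator
`Λ : ⋀[K]^n V → (⋀[K]^n W) ⊗[k] B` such that whenever `v₁, …, vₙ ∈ V` are constants of `D`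
(i.e. `D vᵢ = vᵢ ⊗ 1`), the wedge `v₁ ∧ ⋯ ∧ vₙ` satisfies
`Λ (v₁ ∧ ⋯ ∧ vₙ) = (v₁ ∧ ⋯ ∧ vₙ) ⊗ 1`. -/
theorem BOperator.exists_exteriorPower_partialOperator
    (k K B : Type*) [Field k] [Field K] [Algebra k K] [CommRing B] [Algebra k B]
    (π : B →ₐ[k] k)
    (δ : K →ₐ[k] K ⊗[k] B) (hδ0 : (BOp.counit k K B π).comp δ = AlgHom.id k K)
    (W : Type*) [AddCommGroup W] [Module k W] [Module K W] [IsScalarTower k K W]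
    (V : Submodule K W)
    (D : V → W ⊗[k] B)
    (hDadd : ∀ u v : V, D (u + v) = D u + D v)
    (hDsmul : ∀ (α : K) (v : V), D (α • v) = BOp.act k K B W (δ α) (D v))
    (n : ℕ)
    :
    ∃ Λ : (⋀[K]^n V) → (⋀[K]^n W) ⊗[k] B,
      (∀ x y : ⋀[K]^n V, Λ (x + y) = Λ x + Λ y) ∧
      (∀ (α : K) (x : ⋀[K]^n V), Λ (α • x) = BOp.act k K B (⋀[K]^n W) (δ α) (Λ x)) ∧
      (∀ v : Fin n → V, (∀ i, D (v i) = ((v i : W) ⊗ₜ[k] (1 : B))) →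
        Λ ⟨ExteriorAlgebra.ιMulti K n v, ExteriorAlgebra.ιMulti_range K n (Set.mem_range_self v)⟩
          = (⟨ExteriorAlgebra.ιMulti K n (fun i => (v i : W)),
              ExteriorAlgebra.ιMulti_range K n (Set.mem_range_self _)⟩ : ⋀[K]^n W)
            ⊗ₜ[k] (1 : B)) := by
  classical
  set DL : V →ₗ[K] BOpAux.TwM k K B W δ :=
    { toFun := D
      map_add' := hDadd
      map_smul' := fun α v => hDsmul α v } with hDL
  set Φ : V [⋀^Fin n]→ₗ[K] BOpAux.TwM k K B (⋀[K]^n W) δ :=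
    (BOpAux.wedgeAlt k K B W δ n).compLinearMap DL with hΦ
  set L : ExteriorAlgebra K V →ₗ[K] BOpAux.TwM k K B (⋀[K]^n W) δ :=
    ExteriorAlgebra.liftAlternating (Pi.single n Φ) with hL
  refine ⟨fun x => L (x : ExteriorAlgebra K V), fun x y => ?_, fun α x => ?_, fun v hv => ?_⟩
  · show L ((x + y : ⋀[K]^n V) : ExteriorAlgebra K V) = L x + L y
    rw [Submodule.coe_add, map_add]
  · show L ((α • x : ⋀[K]^n V) : ExteriorAlgebra K V)
      = BOp.act k K B (⋀[K]^n W) (δ α) (L x)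
    rw [Submodule.coe_smul, map_smul]
    rfl
  · show L (ExteriorAlgebra.ιMulti K n v) = _
    rw [hL, ExteriorAlgebra.liftAlternating_apply_ιMulti, Pi.single_eq_same, hΦ,
      AlternatingMap.compLinearMap_apply]
    have hDv : (fun i => DL (v i)) = fun i =>
        (((v i : W) ⊗ₜ[k] (1 : B)) : BOpAux.TwM k K B W δ) := by
      funext i
      exact hv i
    show BOpAux.wedgeFun k K B W n (fun i => DL (v i)) = _
    rw [hDv]
    apply BOpAux.incl_inj k K B W n
    rw [BOpAux.incl_wedgeFun, BOpAux.P_apply, BOpAux.incl_tmul]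
    have hj : (fun i : Fin n => BOpAux.jmap k K B W ((v i : W) ⊗ₜ[k] (1 : B)))
        = fun i : Fin n => (ExteriorAlgebra.ι K (v i : W) ⊗ₜ[k] (1 : B) :
            ExteriorAlgebra K W ⊗[k] B) := by
      funext i
      exact BOpAux.jmap_tmul k K B W _ _
    rw [hj, BOpAux.prod_tmul_one, ← ExteriorAlgebra.ιMulti_apply]
end

section
/- Let k be a field, B a commutative k-algebra with a k-algebra homomorphism π : B → k, K a field extension of k with a B-operator ∂ : K → K ⊗_k B, and let V be a K-subspace of a K-vector space W. Let D : V → W ⊗_k B be a ∂-operator and set C := K^∂ = {α ∈ K : ∂(α) = α ⊗ 1_B} (a subfield of K) and V^D := {v ∈ V : D(v) = v ⊗ 1_B} (a C-subspace of V). Then the natural map K ⊗_C V^D → V induced by scalar multiplication is injective; equivalently, every family of elements of V^D that is linearly independent over C is linearly independent over K. -/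
open TensorProduct

lemma BOp.act_tmul (k K B : Type*) [Field k] [Field K] [Algebra k K]
    [CommRing B] [Algebra k B] (W : Type*) [AddCommGroup W] [Module k W] [Module K W]
    [IsScalarTower k K W] (α : K) (b : B) (w : W) (c : B) :
    BOp.act k K B W (α ⊗ₜ[k] b) (w ⊗ₜ[k] c) = (α • w) ⊗ₜ[k] (b * c) := by
  simp [BOp.act, TensorProduct.curry_apply, TensorProduct.tensorTensorTensorComm_tmul]

/-- Auxiliary: apply a functional `φ : B →ₗ[k] k` to the second factor of `M ⊗[k] B`. -/
noncomputable def BOp.eps (k M B : Type*) [Field k] [CommRing B] [Algebra k B]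
    [AddCommGroup M] [Module k M] (φ : B →ₗ[k] k) : M ⊗[k] B →ₗ[k] M :=
  (TensorProduct.rid k M).toLinearMap ∘ₗ LinearMap.lTensor M φ

lemma BOp.eps_tmul (k M B : Type*) [Field k] [CommRing B] [Algebra k B]
    [AddCommGroup M] [Module k M] (φ : B →ₗ[k] k) (m : M) (b : B) :
    BOp.eps k M B φ (m ⊗ₜ[k] b) = φ b • m := by
  simp [BOp.eps]

/-- Functionals on `B` separate points of `K ⊗[k] B`. -/
lemma BOp.eps_sep (k K B : Type*) [Field k] [Field K] [Algebra k K]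
    [CommRing B] [Algebra k B] (x : K ⊗[k] B)
    (h : ∀ φ : B →ₗ[k] k, BOp.eps k K B φ x = 0) : x = 0 := by
  classical
  let b := Module.Basis.ofVectorSpace k B
  let e : K ⊗[k] B ≃ₗ[k] _ := (LinearEquiv.lTensor K b.repr) ≪≫ₗ
    TensorProduct.finsuppScalarRight k k K (Module.Basis.ofVectorSpaceIndex k B)
  suffices h2 : e x = 0 by exact e.injective (by simp [h2])
  ext m
  have key : ∀ y : K ⊗[k] B, (e y) m = BOp.eps k K B (b.coord m) y := by
    intro y
    induction y using TensorProduct.induction_on with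
    | zero => simp
    | tmul α c =>
      simp [e, Module.Basis.coord_apply, TensorProduct.finsuppScalarRight_apply_tmul_apply,
        BOp.eps_tmul, Algebra.smul_def, mul_comm]
    | add x y hx hy => simp only [map_add, Finsupp.add_apply, hx, hy]
  rw [key x, h (b.coord m)]
  simp

lemma BOp.eps_act (k K B : Type*) [Field k] [Field K] [Algebra k K]
    [CommRing B] [Algebra k B] (W : Type*) [AddCommGroup W] [Module k W] [Module K W]
    [IsScalarTower k K W] (φ : B →ₗ[k] k) (x : K ⊗[k] B) (w : W) :
    BOp.eps k W B φ (BOp.act k K B W x (w ⊗ₜ[k] (1 : B))) = BOp.eps k K B φ x • w := by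
  induction x using TensorProduct.induction_on with
  | zero => simp
  | tmul α b => rw [BOp.act_tmul, mul_one, BOp.eps_tmul, BOp.eps_tmul, smul_assoc]
  | add x y hx hy => simp only [map_add, LinearMap.add_apply, hx, hy, add_smul]

/-- (Theorem 4.6: linear disjointness.) Let `(K, δ)` be a `B`-field extending `k`, let `V` be a
`K`-subspace of a `K`-vector space `W`, and let `D : V → W ⊗[k] B` be a `δ`-operator. Let
`C = K^δ` be the constants of `δ` and `V^D` the constants of `D`. Then the natural map
`K ⊗_C V^D → V` is injective; equivalently, every family of elements of `V^D` that is linearly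
independent over `C` (expressed as: nontrivial finite linear combinations with coefficients
among the constants of `δ` do not vanish) is linearly independent over `K`. -/
theorem BOperator.constants_linearIndependent
    (k K B : Type*) [Field k] [Field K] [Algebra k K] [CommRing B] [Algebra k B]
    (π : B →ₐ[k] k)
    (δ : K →ₐ[k] K ⊗[k] B) (hδ0 : (BOp.counit k K B π).comp δ = AlgHom.id k K)
    (W : Type*) [AddCommGroup W] [Module k W] [Module K W] [IsScalarTower k K W]
    (V : Submodule K W)
    (D : V → W ⊗[k] B)
    (hDadd : ∀ u v : V, D (u + v) = D u + D v)
    (hDsmul : ∀ (α : K) (v : V), D (α • v) = BOp.act k K B W (δ α) (D v))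
    (ι : Type*) (v : ι → V)
    (hv : ∀ i, D (v i) = ((v i : W) ⊗ₜ[k] (1 : B)))
    (hindep : ∀ (s : Finset ι) (g : ι → K), (∀ i, δ (g i) = (g i) ⊗ₜ[k] (1 : B)) →
      ∑ i ∈ s, g i • v i = 0 → ∀ i ∈ s, g i = 0) :
    LinearIndependent K v := by
  classical
  let D' : V →+ W ⊗[k] B := AddMonoidHom.mk' D hDadd
  rw [linearIndependent_iff']
  suffices H : ∀ n : ℕ, ∀ s : Finset ι, s.card ≤ n → ∀ g : ι → K,
      ∑ j ∈ s, g j • v j = 0 → ∀ i ∈ s, g i = 0 by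
    exact fun s g h i hi => H s.card s le_rfl g h i hi
  intro n
  induction n with
  | zero =>
    intro s hcard g _ i hi
    rw [Nat.le_zero, Finset.card_eq_zero] at hcard
    simp [hcard] at hi
  | succ n ih =>
    intro s hcard g hsum i hi
    by_contra hgi
    set g' : ι → K := fun j => (g i)⁻¹ * g j with hg'
    have hg'i : g' i = 1 := inv_mul_cancel₀ hgi
    have hsum' : ∑ j ∈ s, g' j • v j = 0 := by
      have : ∑ j ∈ s, g' j • v j = (g i)⁻¹ • ∑ j ∈ s, g j • v j := by
        rw [Finset.smul_sum]
        exact Finset.sum_congr rfl fun j _ => mul_smul _ _ _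
      rw [this, hsum, smul_zero]
    -- Apply D to the relation
    have hDsum : ∑ j ∈ s, BOp.act k K B W (δ (g' j)) ((v j : W) ⊗ₜ[k] (1 : B)) = 0 := by
      have h1 : D' (∑ j ∈ s, g' j • v j) = 0 := by rw [hsum', map_zero]
      rw [map_sum] at h1
      have h2 : ∀ j ∈ s, D' (g' j • v j) =
          BOp.act k K B W (δ (g' j)) ((v j : W) ⊗ₜ[k] (1 : B)) := by
        intro j _
        show D (g' j • v j) = _
        rw [hDsmul, hv]
      rwa [Finset.sum_congr rfl h2] at h1
    -- The original relation, tensored with 1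
    have hBsum : ∑ j ∈ s, BOp.act k K B W ((g' j) ⊗ₜ[k] (1 : B)) ((v j : W) ⊗ₜ[k] (1 : B))
        = 0 := by
      have h0 : ((∑ j ∈ s, g' j • v j : V) : W) ⊗ₜ[k] (1 : B) = 0 := by
        rw [hsum']; simp
      rw [Submodule.coe_sum, TensorProduct.sum_tmul] at h0
      have h2 : ∀ j ∈ s, BOp.act k K B W ((g' j) ⊗ₜ[k] (1 : B)) ((v j : W) ⊗ₜ[k] (1 : B))
          = ((g' j • v j : V) : W) ⊗ₜ[k] (1 : B) := by
        intro j _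
        rw [BOp.act_tmul, one_mul, Submodule.coe_smul]
      rw [Finset.sum_congr rfl h2]
      exact h0
    -- Subtract
    have hsub : ∑ j ∈ s,
        BOp.act k K B W (δ (g' j) - (g' j) ⊗ₜ[k] (1 : B)) ((v j : W) ⊗ₜ[k] (1 : B)) = 0 := by
      simp only [map_sub, LinearMap.sub_apply]
      rw [Finset.sum_sub_distrib, hDsum, hBsum, sub_zero]
    -- Apply functionals to get relations over K, supported on s.erase i
    have hzero_i : δ (g' i) - (g' i) ⊗ₜ[k] (1 : B) = 0 := by
      rw [hg'i, map_one, Algebra.TensorProduct.one_def, sub_self]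
    have hrel : ∀ φ : B →ₗ[k] k, ∑ j ∈ s.erase i,
        (BOp.eps k K B φ (δ (g' j) - (g' j) ⊗ₜ[k] (1 : B))) • v j = 0 := by
      intro φ
      have h1 := congrArg (BOp.eps k W B φ) hsub
      rw [map_sum, map_zero] at h1
      have h2 : ∀ j ∈ s,
          BOp.eps k W B φ
            (BOp.act k K B W (δ (g' j) - (g' j) ⊗ₜ[k] (1 : B)) ((v j : W) ⊗ₜ[k] (1 : B)))
          = (BOp.eps k K B φ (δ (g' j) - (g' j) ⊗ₜ[k] (1 : B))) • (v j : W) := fun j _ =>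
        BOp.eps_act k K B W φ _ _
      rw [Finset.sum_congr rfl h2] at h1
      have h3 : ∑ j ∈ s, (BOp.eps k K B φ (δ (g' j) - (g' j) ⊗ₜ[k] (1 : B))) • v j = 0 := by
        have hc : ((∑ j ∈ s, (BOp.eps k K B φ (δ (g' j) - (g' j) ⊗ₜ[k] (1 : B))) • v j : V) : W)
            = 0 := by
          rw [Submodule.coe_sum]
          simpa using h1
        exact_mod_cast hc
      rw [← Finset.add_sum_erase s _ hi, hzero_i] at h3
      simpa using h3
    -- Induction hypothesis kills the coefficients on s.erase i
    have hconst : ∀ j ∈ s.erase i, δ (g' j) = (g' j) ⊗ₜ[k] (1 : B) := by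
      intro j hj
      have h4 : δ (g' j) - (g' j) ⊗ₜ[k] (1 : B) = 0 := by
        apply BOp.eps_sep
        intro φ
        exact ih (s.erase i)
          (by
            have := Finset.card_erase_lt_of_mem hi
            omega)
          (fun j => BOp.eps k K B φ (δ (g' j) - (g' j) ⊗ₜ[k] (1 : B))) (hrel φ) j hj
      exact sub_eq_zero.mp h4
    -- Conclude: g' restricted to s has constant coefficients; contradiction via hindep
    have hconst' : ∀ j, δ (if j ∈ s then g' j else 0) =
        (if j ∈ s then g' j else 0) ⊗ₜ[k] (1 : B) := by
      intro j
      by_cases hjs : j ∈ s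
      · simp only [hjs, if_true]
        by_cases hji : j = i
        · subst hji
          rw [hg'i, map_one, Algebra.TensorProduct.one_def]
        · exact hconst j (Finset.mem_erase.mpr ⟨hji, hjs⟩)
      · simp [hjs]
    have hsum'' : ∑ j ∈ s, (if j ∈ s then g' j else 0) • v j = 0 := by
      rw [Finset.sum_congr rfl fun j hj => by rw [if_pos hj]]
      exact hsum'
    have := hindep s _ hconst' hsum'' i hi
    rw [if_pos hi, hg'i] at this
    exact one_ne_zero this
end

section
/- Let k be a field, B a commutative k-algebra with a k-algebra homomorphism π : B → k, and let (K, ∂) ⊆ (L, ∂') be an extension of fields with B-operators (K ⊆ L and ∂'|_K equals the composition of ∂ with the map K ⊗_k B → L ⊗_k B). Then K is linearly disjoint from the constant field L^{∂'} over K^∂ inside L: the multiplication map K ⊗_{K^∂} L^{∂'} → L is injective; equivalently, every family of elements of L^{∂'} that is linearly independent over K^∂ remains linearly independent over K. -/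
open TensorProduct

/-- (Corollary 4.7.) Let `(K, δ) ⊆ (L, δ')` be an extension of fields with `B`-operators.
Then `K` is linearly disjoint from the constants `L^{δ'}` over `K^δ` inside `L`:
every family of elements of `L^{δ'}` that is linearly independent over `K^δ` remains
linearly independent over `K`. -/
theorem BOperator.constants_linearly_disjoint
    (k B : Type*) [Field k] [CommRing B] [Algebra k B] (π : B →ₐ[k] k)
    (K L : Type*) [Field K] [Field L] [Algebra k K] [Algebra k L]
    [Algebra K L] [IsScalarTower k K L]
    (δ : K →ₐ[k] K ⊗[k] B) (hδ0 : (BOp.counit k K B π).comp δ = AlgHom.id k K)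
    (δ' : L →ₐ[k] L ⊗[k] B) (hδ'0 : (BOp.counit k L B π).comp δ' = AlgHom.id k L)
    (hext : δ'.comp (IsScalarTower.toAlgHom k K L) =
      (Algebra.TensorProduct.map (IsScalarTower.toAlgHom k K L) (AlgHom.id k B)).comp δ)
    (ι : Type*) (v : ι → L)
    (hv : ∀ i, δ' (v i) = (v i) ⊗ₜ[k] (1 : B))
    (hindep : ∀ (s : Finset ι) (g : ι → K), (∀ i, δ (g i) = (g i) ⊗ₜ[k] (1 : B)) →
      ∑ i ∈ s, g i • v i = 0 → ∀ i ∈ s, g i = 0) :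
    LinearIndependent K v := by
  classical
  set ιKL := IsScalarTower.toAlgHom k K L with hιKL
  set Φ := Algebra.TensorProduct.map ιKL (AlgHom.id k B) with hΦ
  set b := Module.Basis.ofVectorSpace k B with hb
  have coordΦ : ∀ (x : K ⊗[k] B) (j), ((b.baseChange L).repr (Φ x)) j
      = algebraMap K L (((b.baseChange K).repr x) j) := by
    intro x j
    induction x using TensorProduct.induction_on with
    | zero => simp
    | tmul c y =>
        simp [hΦ, Module.Basis.baseChange_repr_tmul, Algebra.smul_def, hιKL,
          IsScalarTower.algebraMap_apply k K L, map_mul]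
    | add x y hx hy => simp [hx, hy]
  have hextapp : ∀ c : K, δ' (algebraMap K L c) = Φ (δ c) := by
    intro c
    have := DFunLike.congr_fun hext c
    simpa [hιKL, hΦ] using this
  rw [linearIndependent_iff']
  intro s
  induction s using Finset.strongInduction with
  | _ s IH =>
    intro g hsum i0 hi0s
    by_contra hg0
    -- normalized coefficients
    set h : ι → K := fun i => if i ∈ s then (g i0)⁻¹ * g i else 0 with hh
    have hhi0 : h i0 = 1 := by simp [hh, hi0s, inv_mul_cancel₀ hg0]
    have hhsum : ∑ i ∈ s, h i • v i = 0 := by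
      have : ∑ i ∈ s, h i • v i = (g i0)⁻¹ • ∑ i ∈ s, g i • v i := by
        rw [Finset.smul_sum]
        refine Finset.sum_congr rfl fun i hi => ?_
        simp [hh, hi, mul_smul]
      rw [this, hsum, smul_zero]
    -- the deviation from constancy
    set d : ι → K ⊗[k] B := fun i => δ (h i) - (h i) ⊗ₜ[k] (1 : B) with hd
    have hdi0 : d i0 = 0 := by simp [hd, hhi0, Algebra.TensorProduct.one_def]
    -- key relation: ∑ i in s, v i • Φ (d i) = 0
    have keyrel : ∑ i ∈ s, v i • Φ (d i) = 0 := by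
      have e1 : ∑ i ∈ s, Φ (δ (h i)) * ((v i) ⊗ₜ[k] (1 : B)) = 0 := by
        have : δ' (∑ i ∈ s, h i • v i) = 0 := by rw [hhsum, map_zero]
        rw [map_sum] at this
        rw [← this]
        refine Finset.sum_congr rfl fun i hi => ?_
        rw [Algebra.smul_def, map_mul, hextapp, hv]
      have e2 : ∑ i ∈ s, Φ ((h i) ⊗ₜ[k] (1:B)) * ((v i) ⊗ₜ[k] (1:B)) = 0 := by
        have : ∀ i, Φ ((h i) ⊗ₜ[k] (1:B)) * ((v i) ⊗ₜ[k] (1:B))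
            = (h i • v i) ⊗ₜ[k] (1:B) := by
          intro i
          simp [hΦ, Algebra.TensorProduct.tmul_mul_tmul, Algebra.smul_def, hιKL]
        rw [Finset.sum_congr rfl fun i _ => this i, ← TensorProduct.sum_tmul, hhsum,
          TensorProduct.zero_tmul]
      have e3 : ∀ i, v i • Φ (d i) = Φ (δ (h i)) * ((v i) ⊗ₜ[k] (1:B))
          - Φ ((h i) ⊗ₜ[k] (1:B)) * ((v i) ⊗ₜ[k] (1:B)) := by
        intro i
        have hs : ∀ t : L ⊗[k] B, v i • t = t * ((v i) ⊗ₜ[k] (1:B)) := by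
          intro t
          rw [Algebra.smul_def, mul_comm]
          norm_num [Algebra.TensorProduct.algebraMap_apply]
        rw [hd, map_sub, smul_sub, hs, hs]
      rw [Finset.sum_congr rfl fun i _ => e3 i, Finset.sum_sub_distrib, e1, e2, sub_zero]
    -- coordinates
    set c : ι → _ → K := fun i j => ((b.baseChange K).repr (d i)) j with hc
    have hcrel : ∀ j, ∑ i ∈ s, c i j • v i = 0 := by
      intro j
      have := congrArg (fun t => ((b.baseChange L).repr t) j) keyrel
      simp only [map_sum, Finsupp.coe_finset_sum, Finset.sum_apply, map_zero,
        Finsupp.coe_zero, Pi.zero_apply] at this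
      rw [← this]
      refine Finset.sum_congr rfl fun i hi => ?_
      rw [map_smul, Finsupp.smul_apply, coordΦ, hc, Algebra.smul_def, smul_eq_mul, mul_comm]
    have hci0 : ∀ j, c i0 j = 0 := by intro j; simp [hc, hdi0]
    have hczero : ∀ j, ∀ i ∈ s, c i j = 0 := by
      intro j i hi
      by_cases hii0 : i = i0
      · rw [hii0]; exact hci0 j
      · have herase : ∑ i ∈ s.erase i0, c i j • v i = 0 := by
          rw [← hcrel j, Finset.sum_erase s (by rw [hci0 j, zero_smul])]
        exact IH (s.erase i0) (Finset.erase_ssubset hi0s) _ herase i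
          (Finset.mem_erase.2 ⟨hii0, hi⟩)
    have hdzero : ∀ i ∈ s, d i = 0 := by
      intro i hi
      have : (b.baseChange K).repr (d i) = 0 := by
        ext j; exact hczero j i hi
      simpa using congrArg (b.baseChange K).repr.symm this
    have hconst : ∀ i, δ (h i) = (h i) ⊗ₜ[k] (1 : B) := by
      intro i
      by_cases hi : i ∈ s
      · have := hdzero i hi
        exact sub_eq_zero.mp this
      · simp [hh, hi]
    have := hindep s h hconst hhsum i0 hi0s
    rw [hhi0] at this
    exact one_ne_zero this
end

section
/- Let k be a field and B a finite-dimensional commutative local k-algebra with a k-algebra homomorphism π : B → k, and suppose B ≠ k, i.e. ker π ≠ 0 (equivalently dim_k B ≥ 2). Then there exists a surjective k-algebra homomorphism B → k[X]/(X²) (equivalently, onto the dual numbers DualNumber k). -/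
/-- Let `k` be a field and `B` a finite-dimensional commutative local `k`-algebra with a
`k`-algebra homomorphism `π : B → k`, and suppose `B ≠ k`, i.e. `ker π ≠ 0`. Then there is a
surjective `k`-algebra homomorphism from `B` onto the dual numbers `k[X]/(X²)`. -/
theorem exists_surjective_algHom_to_dualNumber
    (k B : Type*) [Field k] [CommRing B] [Algebra k B]
    [FiniteDimensional k B] [IsLocalRing B] (π : B →ₐ[k] k)
    (hne : RingHom.ker π ≠ ⊥) :
    ∃ f : B →ₐ[k] DualNumber k, Function.Surjective f := by
  classical
  have hsurj : Function.Surjective (π : B →+* k) := fun c => ⟨algebraMap k B c, by simp⟩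
  have hker : RingHom.ker (π : B →+* k) = IsLocalRing.maximalIdeal B :=
    IsLocalRing.ker_eq_maximalIdeal (π : B →+* k) hsurj
  set m : Ideal B := IsLocalRing.maximalIdeal B with hm
  have hmne : m ≠ ⊥ := hker ▸ hne
  have hart : IsArtinian B B := isArtinian_of_tower k inferInstance
  obtain ⟨n, hn⟩ : IsNilpotent m := by
    have h := IsArtinianRing.isNilpotent_jacobson_bot (R := B)
    rwa [IsLocalRing.jacobson_eq_maximalIdeal ⊥ bot_ne_top] at h
  set W : Submodule k B := (Submodule.restrictScalars k ((m ^ 2 : Ideal B) : Submodule B B))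
      ⊔ (k ∙ (1 : B)) with hW
  have h1W : (1 : B) ∈ W := Submodule.mem_sup_right (Submodule.mem_span_singleton_self 1)
  have hm2W : ∀ y ∈ (m ^ 2 : Ideal B), y ∈ W := fun y hy => Submodule.mem_sup_left hy
  -- there is `x ∈ m` with `x ∉ W`
  obtain ⟨x, hxm, hxW⟩ : ∃ x, x ∈ m ∧ x ∉ W := by
    by_contra h
    push_neg at h
    have hle : ∀ y ∈ m, y ∈ (m ^ 2 : Ideal B) := by
      intro y hy
      obtain ⟨z, hz, w, hw, hsum⟩ := Submodule.mem_sup.mp (h y hy)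
      obtain ⟨c, rfl⟩ := Submodule.mem_span_singleton.mp hw
      have hπy : π y = 0 := by rw [← hker] at hy; exact hy
      have hπz : π z = 0 := by
        have hzm : z ∈ m := (Ideal.pow_le_self two_ne_zero) hz
        rw [← hker] at hzm; exact hzm
      have hc : c = 0 := by
        have h2 := congrArg π hsum
        simpa [hπz, hπy] using h2
      rw [hc, zero_smul, add_zero] at hsum
      rw [← hsum]; exact hz
    have heq : m ^ 2 = m :=
      le_antisymm (Ideal.pow_le_self two_ne_zero) (fun y hy => hle y hy)
    have hpow : ∀ j : ℕ, 1 ≤ j → m ^ j = m := by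
      intro j hj
      induction j with
      | zero => omega
      | succ i ih =>
        rcases Nat.lt_or_ge 1 (i + 1) with h' | h'
        · have hi : 1 ≤ i := by omega
          rw [pow_succ, ih hi, ← pow_two, heq]
        · have : i = 0 := by omega
          simp [this]
    rcases Nat.eq_zero_or_pos n with rfl | hn1
    · have h1 : (1 : B) ∈ (m ^ 0 : Ideal B) := by simp
      rw [hn] at h1
      exact one_ne_zero (α := B) (by simpa using h1)
    · exact hmne (by rw [← hpow n hn1]; simpa using hn)
  -- a linear functional killing `W` and sending `x` to `1`
  obtain ⟨T, hT⟩ :=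
    (LinearPMap.supSpanSingleton (⟨W, 0⟩ : B →ₗ.[k] k) x (1 : k) hxW).toFun.exists_extend
  have hTW : ∀ w ∈ W, T w = 0 := by
    intro w hw
    have h0 := LinearPMap.supSpanSingleton_apply_mk (⟨W, 0⟩ : B →ₗ.[k] k) x (1 : k) hxW w hw 0
    have := LinearMap.congr_fun hT
      (⟨w + (0 : k) • x, Submodule.add_mem_sup hw (Submodule.smul_mem _ _
        (Submodule.mem_span_singleton_self x))⟩ :
        (LinearPMap.supSpanSingleton (⟨W, 0⟩ : B →ₗ.[k] k) x (1 : k) hxW).domain)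
    simpa using (show T (w + (0 : k) • x) = _ from this.trans h0)
  have hTx : T x = 1 := by
    have h0 := LinearPMap.supSpanSingleton_apply_mk (⟨W, 0⟩ : B →ₗ.[k] k) x (1 : k) hxW 0 W.zero_mem 1
    have := LinearMap.congr_fun hT
      (⟨0 + (1 : k) • x, Submodule.add_mem_sup W.zero_mem (Submodule.smul_mem _ _
        (Submodule.mem_span_singleton_self x))⟩ :
        (LinearPMap.supSpanSingleton (⟨W, 0⟩ : B →ₗ.[k] k) x (1 : k) hxW).domain)
    simpa using (show T (0 + (1 : k) • x) = _ from this.trans h0)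
  have hT1 : T (1 : B) = 0 := hTW 1 h1W
  -- key multiplicative identity
  have key : ∀ a b : B, T (a * b) = π a * T b + π b * T a := by
    intro a b
    have hmema : a - π a • (1 : B) ∈ m := by
      rw [← hker]
      show π (a - π a • 1) = 0
      simp [Algebra.smul_def]
    have hmemb : b - π b • (1 : B) ∈ m := by
      rw [← hker]
      show π (b - π b • 1) = 0
      simp [Algebra.smul_def]
    have hprod : (a - π a • (1 : B)) * (b - π b • (1 : B)) ∈ W := by
      apply hm2W
      rw [pow_two]
      exact Ideal.mul_mem_mul hmema hmemb
    have hab : a * b = π a • b + π b • a - (π a * π b) • (1 : B)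
        + (a - π a • (1 : B)) * (b - π b • (1 : B)) := by
      simp only [Algebra.smul_def, map_mul, mul_one]
      ring
    rw [hab]
    rw [map_add, map_sub, map_add, map_smul, map_smul, map_smul, hT1, hTW _ hprod,
      smul_eq_mul, smul_eq_mul, smul_eq_mul]
    ring
  -- build the algebra hom to the dual numbers
  set L : B →ₗ[k] DualNumber k :=
    (Algebra.linearMap k (DualNumber k)).comp π.toLinearMap
      + (TrivSqZeroExt.inrHom k k).comp T with hL
  have hLapp : ∀ b : B, L b = TrivSqZeroExt.inl (π b) + TrivSqZeroExt.inr (T b) := by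
    intro b
    simp [hL, TrivSqZeroExt.algebraMap_eq_inl']
  have hone : L 1 = 1 := by
    rw [hLapp, map_one, hT1, TrivSqZeroExt.inr_zero, add_zero, TrivSqZeroExt.inl_one]
  have hmul : ∀ a b : B, L (a * b) = L a * L b := by
    intro a b
    rw [hLapp, hLapp, hLapp, map_mul, key]
    ext
    · simp
    · simp [smul_eq_mul]
      ring
  refine ⟨AlgHom.ofLinearMap L hone hmul, ?_⟩
  intro z
  refine ⟨algebraMap k B z.fst + z.snd • x, ?_⟩
  have hπx : π x = 0 := by rw [← hker] at hxm; exact hxm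
  have hTalg : T (algebraMap k B z.fst) = 0 := by
    rw [Algebra.algebraMap_eq_smul_one, map_smul, hT1, smul_zero]
  show L _ = z
  rw [hLapp, map_add, map_add, map_smul, map_smul, hTalg, hTx, hπx]
  simp [AlgHom.commutes]
  ext
  · simp
  · simp
end
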